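/- For every m ∈ ℕ there exists a histogram polygon P such that, under r-visibility with vertex guards and geodesic L1-distances, every vertex guard set of P attaining the maximum possible dispersion distance has cardinality at least m times the minimum cardinality of a vertex guard set of P; hence the ratio between the size of a smallest maximally dispersed vertex guard set and the size of a smallest vertex guard set can be arbitrarily large, even for histograms. -/

import Mathlib

open Set
open scoped ENNReal

noncomputable section

/-- The plane, equipped with the `L¹` metric. -/
abbrev Plane : Type := WithLp 1 (ℝ × ℝ)

namespace DispersiveAGP

noncomputable instance : DecidableEq Plane := Classical.decEq _

/-- The `x`-coordinate of a point of the plane. -/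
def px (p : Plane) : ℝ := (WithLp.equiv 1 (ℝ × ℝ) p).1

/-- The `y`-coordinate of a point of the plane. -/
def py (p : Plane) : ℝ := (WithLp.equiv 1 (ℝ × ℝ) p).2

/-- The point of the plane with the given coordinates. -/
def pt (a b : ℝ) : Plane := (WithLp.equiv 1 (ℝ × ℝ)).symm (a, b)

/-- Data of an axis-parallel rectangle. -/
structure Rect where
  x1 : ℝ
  x2 : ℝ
  y1 : ℝ
  y2 : ℝ

noncomputable instance : DecidableEq Rect := Classical.decEq _

/-- The closed rectangle, as a set of points of the plane. -/
def Rect.toSet (R : Rect) : Set Plane :=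
  {p | R.x1 ≤ px p ∧ px p ≤ R.x2 ∧ R.y1 ≤ py p ∧ py p ≤ R.y2}

/-- The open rectangle. -/
def Rect.interiorSet (R : Rect) : Set Plane :=
  {p | R.x1 < px p ∧ px p < R.x2 ∧ R.y1 < py p ∧ py p < R.y2}

/-- The rectangle is nondegenerate. -/
def Rect.Nondegenerate (R : Rect) : Prop := R.x1 < R.x2 ∧ R.y1 < R.y2

/-- `p` and `q` r-see each other within the region `S`: the closed axis-parallel
rectangle with opposite corners `p` and `q` is contained in `S`. -/
def RSee (S : Set Plane) (p q : Plane) : Prop :=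
  {r : Plane | min (px p) (px q) ≤ px r ∧ px r ≤ max (px p) (px q) ∧
      min (py p) (py q) ≤ py r ∧ py r ≤ max (py p) (py q)} ⊆ S

/-- A vertex of (the boundary of) the region `S`: a boundary point such that in no
neighborhood of it is the boundary contained in a single line. -/
def IsVertex (S : Set Plane) (v : Plane) : Prop :=
  v ∈ frontier S ∧
    ∀ ε > (0 : ℝ), ¬ ∃ a b c : ℝ, (a ≠ 0 ∨ b ≠ 0) ∧
      ∀ q ∈ frontier S ∩ Metric.ball v ε, a * px q + b * py q = c

/-- A vertex guard set of the region `S`, under r-visibility. -/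
def IsGuardSet (S : Set Plane) (G : Finset Plane) : Prop :=
  (∀ g ∈ G, IsVertex S g) ∧ ∀ p ∈ S, ∃ g ∈ G, RSee S g p

/-- Geodesic `L¹`-distance within `S`: the infimum of `L¹`-lengths (total variations
with respect to the `L¹` metric) of paths from `p` to `q` that stay inside `S`. -/
def geodesic (S : Set Plane) (p q : Plane) : ℝ≥0∞ :=
  ⨅ (γ : Path p q) (_ : Set.range (fun t => γ t) ⊆ S),
    eVariationOn (fun t => γ t) Set.univ

/-- The dispersion distance of a guard set `G` within region `S`: the minimum geodesic
`L¹`-distance between two distinct guards. -/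
def dispersion (S : Set Plane) (G : Finset Plane) : ℝ≥0∞ :=
  ⨅ (g ∈ G) (g' ∈ G) (_ : g ≠ g'), geodesic S g g'

/-- The guard set `G` has dispersion distance at least `ℓ`. -/
def DispersionAtLeast (S : Set Plane) (G : Finset Plane) (ℓ : ℝ≥0∞) : Prop :=
  ∀ g ∈ G, ∀ g' ∈ G, g ≠ g' → ℓ ≤ geodesic S g g'

/-- `G` is a vertex guard set attaining the maximum possible dispersion distance. -/
def AttainsMaxDispersion (S : Set Plane) (G : Finset Plane) : Prop :=
  IsGuardSet S G ∧ ∀ G' : Finset Plane, IsGuardSet S G' → dispersion S G' ≤ dispersion S G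

/-- The horizontal corridor `C` connects the room `R1` (on its left) with the room `R2`
(on its right): the two vertical sides of `C` are strictly contained in the relative
interiors of the corresponding vertical edges of `R1` resp. `R2`. -/
def ConnectsH (C R1 R2 : Rect) : Prop :=
  R1.x2 = C.x1 ∧ C.x2 = R2.x1 ∧
  R1.y1 < C.y1 ∧ C.y2 < R1.y2 ∧ R2.y1 < C.y1 ∧ C.y2 < R2.y2

/-- The vertical corridor `C` connects the room `R1` (below) with the room `R2` (above). -/
def ConnectsV (C R1 R2 : Rect) : Prop :=
  R1.y2 = C.y1 ∧ C.y2 = R2.y1 ∧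
  R1.x1 < C.x1 ∧ C.x2 < R1.x2 ∧ R2.x1 < C.x1 ∧ C.x2 < R2.x2

/-- The corridor `C` connects the rooms `R1` and `R2`. -/
def Connects (C R1 R2 : Rect) : Prop := ConnectsH C R1 R2 ∨ ConnectsV C R1 R2

/-- An office-like polygon: a connected union of rectangular rooms linked by
rectangular corridors, each corridor connecting exactly two rooms and being strictly
narrower than both of them. -/
structure OfficePolygon where
  rooms : Finset Rect
  corridors : Finset Rect
  rooms_nonempty : rooms.Nonempty
  nondeg_rooms : ∀ R ∈ rooms, R.Nondegenerate
  nondeg_corridors : ∀ C ∈ corridors, C.Nondegenerate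
  connects : ∀ C ∈ corridors, ∃ R1 ∈ rooms, ∃ R2 ∈ rooms, R1 ≠ R2 ∧ Connects C R1 R2
  corridor_room_disjoint : ∀ C ∈ corridors, ∀ R ∈ rooms, C.interiorSet ∩ R.toSet = ∅
  rooms_disjoint : ∀ R1 ∈ rooms, ∀ R2 ∈ rooms, R1 ≠ R2 → R1.interiorSet ∩ R2.interiorSet = ∅
  corridors_disjoint : ∀ C1 ∈ corridors, ∀ C2 ∈ corridors, C1 ≠ C2 →
    C1.interiorSet ∩ C2.interiorSet = ∅
  connected : IsConnected ((⋃ R ∈ rooms, R.toSet) ∪ (⋃ C ∈ corridors, C.toSet))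

/-- The polygonal region covered by an office-like polygon. -/
def OfficePolygon.region (P : OfficePolygon) : Set Plane :=
  (⋃ R ∈ P.rooms, R.toSet) ∪ (⋃ C ∈ P.corridors, C.toSet)

/-- All vertices of the region lie on integer coordinates. -/
def HasIntegerVertices (S : Set Plane) : Prop :=
  ∀ v, IsVertex S v → ∃ a b : ℤ, v = pt a b

/-- Any two distinct vertices are at geodesic `L¹`-distance at least `1`. -/
def VertexSeparated (S : Set Plane) : Prop :=
  ∀ v w, IsVertex S v → IsVertex S w → v ≠ w → 1 ≤ geodesic S v w

/-- The corridors `C1` and `C2` are independent within `S`: no guard placed at a vertex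
of one of them r-sees all of the other. -/
def IndependentCorridors (S : Set Plane) (C1 C2 : Rect) : Prop :=
  (∀ v, IsVertex S v → v ∈ C1.toSet → ∃ q ∈ C2.toSet, ¬ RSee S v q) ∧
  (∀ v, IsVertex S v → v ∈ C2.toSet → ∃ q ∈ C1.toSet, ¬ RSee S v q)

/-- An office-like polygon is independent if all pairs of distinct corridors are
independent. -/
def OfficePolygon.Independent (P : OfficePolygon) : Prop :=
  ∀ C1 ∈ P.corridors, ∀ C2 ∈ P.corridors, C1 ≠ C2 → IndependentCorridors P.region C1 C2


/-- A histogram polygon: an x-monotone simple orthogonal polygon whose boundary contains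
a single horizontal base edge (here on the x-axis) spanning its full horizontal extent.
It is determined by column abscissas `xs 0 < xs 1 < ⋯ < xs n` and positive column
heights `h 0, …, h (n-1)` with distinct adjacent heights. -/
structure Histogram where
  n : ℕ
  npos : 0 < n
  xs : Fin (n + 1) → ℝ
  mono : StrictMono xs
  h : Fin n → ℝ
  hpos : ∀ i, 0 < h i
  adj_ne : ∀ i j : Fin n, (i : ℕ) + 1 = (j : ℕ) → h i ≠ h j

/-- The region covered by a histogram polygon. -/
def Histogram.region (H : Histogram) : Set Plane :=
  ⋃ i : Fin H.n,
    {p | H.xs i.castSucc ≤ px p ∧ px p ≤ H.xs i.succ ∧ 0 ≤ py p ∧ py p ≤ H.h i}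

-- ===================== auxiliary development =====================
open scoped NNReal

section Basics

@[simp] lemma px_pt (a b : ℝ) : px (pt a b) = a := rfl
@[simp] lemma py_pt (a b : ℝ) : py (pt a b) = b := rfl

lemma pt_ext {p q : Plane} (hx : px p = px q) (hy : py p = py q) : p = q := by
  have : (WithLp.equiv 1 (ℝ × ℝ) p) = (WithLp.equiv 1 (ℝ × ℝ) q) := Prod.ext hx hy
  simpa using congrArg (WithLp.equiv 1 (ℝ × ℝ)).symm this

@[simp] lemma pt_px_py (p : Plane) : pt (px p) (py p) = p := rfl

lemma pt_inj {a b c d : ℝ} (h : pt a b = pt c d) : a = c ∧ b = d := by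
  constructor
  · have := congrArg px h; simpa using this
  · have := congrArg py h; simpa using this

lemma dist_plane (p q : Plane) : dist p q = |px p - px q| + |py p - py q| := by
  rw [WithLp.prod_dist_eq_add (by norm_num : (0:ℝ) < (1 : ℝ≥0∞).toReal)]
  simp [Real.dist_eq, px, py, WithLp.equiv, Equiv.refl_apply]

lemma edist_plane (p q : Plane) :
    edist p q = ENNReal.ofReal (|px p - px q| + |py p - py q|) := by
  rw [edist_dist, dist_plane]

lemma continuous_px : Continuous px := by
  have : Continuous (WithLp.equiv 1 (ℝ × ℝ)) := WithLp.prod_continuous_ofLp _ _ _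
  exact continuous_fst.comp this

lemma continuous_py : Continuous py := by
  have : Continuous (WithLp.equiv 1 (ℝ × ℝ)) := WithLp.prod_continuous_ofLp _ _ _
  exact continuous_snd.comp this

lemma continuous_pt {α : Type*} [TopologicalSpace α] {f g : α → ℝ}
    (hf : Continuous f) (hg : Continuous g) : Continuous (fun t => pt (f t) (g t)) := by
  have : Continuous (WithLp.equiv 1 (ℝ × ℝ)).symm := WithLp.prod_continuous_toLp _ _ _
  exact this.comp (hf.prodMk hg)

end Basics

section Geodesics

lemma telescope_edist {u : ℕ → unitInterval} (hu : Monotone u) (n : ℕ) :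
    ∑ i ∈ Finset.range n, edist (u (i+1)) (u i) =
      ENNReal.ofReal ((u n : ℝ) - (u 0 : ℝ)) := by
  induction n with
  | zero => simp
  | succ n ih =>
    rw [Finset.sum_range_succ, ih]
    have h1 : ((u n : ℝ)) - (u 0 : ℝ) ≥ 0 := by
      have := hu (Nat.zero_le n); exact sub_nonneg.2 this
    have h2 : ((u (n+1) : ℝ)) - (u n : ℝ) ≥ 0 := by
      have := hu (Nat.le_succ n); exact sub_nonneg.2 this
    have : edist (u (n+1)) (u n) = ENNReal.ofReal ((u (n+1) : ℝ) - (u n : ℝ)) := by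
      rw [edist_dist, Subtype.dist_eq, Real.dist_eq, abs_of_nonneg h2]
    rw [this, ← ENNReal.ofReal_add h1 h2]
    ring_nf

lemma eVariationOn_le_of_lipschitz {f : unitInterval → Plane} {K : ℝ≥0}
    (hf : LipschitzWith K f) : eVariationOn f Set.univ ≤ (K : ℝ≥0∞) := by
  refine iSup_le ?_
  rintro ⟨n, u, hu, -⟩
  calc ∑ i ∈ Finset.range n, edist (f (u (i+1))) (f (u i))
      ≤ ∑ i ∈ Finset.range n, (K : ℝ≥0∞) * edist (u (i+1)) (u i) :=
        Finset.sum_le_sum (fun i _ => hf (u (i+1)) (u i))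
    _ = (K : ℝ≥0∞) * ∑ i ∈ Finset.range n, edist (u (i+1)) (u i) := by
        rw [Finset.mul_sum]
    _ ≤ (K : ℝ≥0∞) * 1 := by
        apply mul_le_mul_right
        rw [telescope_edist hu n]
        have : ((u n : ℝ)) - (u 0 : ℝ) ≤ 1 := by
          have h1 := (u n).2.2
          have h2 := (u 0).2.1
          linarith
        calc ENNReal.ofReal ((u n : ℝ) - (u 0 : ℝ)) ≤ ENNReal.ofReal 1 :=
              ENNReal.ofReal_le_ofReal this
          _ = 1 := ENNReal.ofReal_one
    _ = K := mul_one _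

lemma edist_le_geodesic {S : Set Plane} {p q : Plane} : edist p q ≤ geodesic S p q := by
  refine le_iInf fun γ => le_iInf fun _ => ?_
  have h := eVariationOn.edist_le (fun t => γ t) (Set.mem_univ (0 : unitInterval))
    (Set.mem_univ (1 : unitInterval))
  simpa [γ.source, γ.target] using h

lemma geodesic_le_of_path {S : Set Plane} {p q : Plane} (γ : Path p q)
    (hr : Set.range (fun t => γ t) ⊆ S) {K : ℝ≥0}
    (hK : LipschitzWith K (fun t => γ t)) : geodesic S p q ≤ (K : ℝ≥0∞) :=
  iInf_le_of_le γ (iInf_le_of_le hr (eVariationOn_le_of_lipschitz hK))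

lemma lipschitz_glue {f : ℝ → Plane} {K : ℝ≥0} {a : ℝ}
    (h1 : LipschitzOnWith K f (Set.Iic a)) (h2 : LipschitzOnWith K f (Set.Ici a)) :
    LipschitzWith K f := by
  apply LipschitzWith.of_dist_le_mul
  intro x y
  rcases le_total x a with hx | hx
  · rcases le_total y a with hy | hy
    · exact h1.dist_le_mul x hx y hy
    · calc dist (f x) (f y) ≤ dist (f x) (f a) + dist (f a) (f y) := dist_triangle _ _ _
        _ ≤ K * dist x a + K * dist a y :=
            add_le_add (h1.dist_le_mul x hx a Set.self_mem_Iic) (h2.dist_le_mul a Set.self_mem_Ici y hy)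
        _ = K * (dist x a + dist a y) := by ring
        _ ≤ K * dist x y := by
            apply mul_le_mul_of_nonneg_left _ K.coe_nonneg
            rw [Real.dist_eq, Real.dist_eq, Real.dist_eq,
              abs_of_nonpos (by linarith : x - a ≤ 0), abs_of_nonpos (by linarith : a - y ≤ 0),
              abs_of_nonpos (by linarith : x - y ≤ 0)]
            linarith
  · rcases le_total y a with hy | hy
    · calc dist (f x) (f y) ≤ dist (f x) (f a) + dist (f a) (f y) := dist_triangle _ _ _
        _ ≤ K * dist x a + K * dist a y :=
            add_le_add (h2.dist_le_mul x hx a Set.self_mem_Ici) (h1.dist_le_mul a Set.self_mem_Iic y hy)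
        _ = K * (dist x a + dist a y) := by ring
        _ ≤ K * dist x y := by
            apply mul_le_mul_of_nonneg_left _ K.coe_nonneg
            rw [Real.dist_eq, Real.dist_eq, Real.dist_eq,
              abs_of_nonneg (by linarith : 0 ≤ x - a), abs_of_nonneg (by linarith : 0 ≤ a - y),
              abs_of_nonneg (by linarith : 0 ≤ x - y)]
            linarith
    · exact h2.dist_le_mul x hx y hy

end Geodesics

section Construction

/-- Height of column `k` (for `k < M+2`). Column 0 is the spike (height 2),
column 1 the notch (height 1), columns `2+j` the staircase (height `M+1-j`). -/
def hgt (M k : ℕ) : ℝ := if k = 0 then 2 else if k = 1 then 1 else (M:ℝ) + 3 - k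

/-- The region of our histogram. -/
def reg (M : ℕ) : Set Plane :=
  ⋃ k ∈ Finset.range (M+2),
    {p | (k:ℝ) ≤ px p ∧ px p ≤ (k:ℝ)+1 ∧ 0 ≤ py p ∧ py p ≤ hgt M k}

lemma hgt0 (M : ℕ) : hgt M 0 = 2 := by simp [hgt]
lemma hgt1 (M : ℕ) : hgt M 1 = 1 := by simp [hgt]
lemma hgt_stair (M j : ℕ) : hgt M (2+j) = (M:ℝ) + 1 - j := by
  have h0 : 2 + j ≠ 0 := by omega
  have h1 : 2 + j ≠ 1 := by omega
  simp only [hgt, if_neg h0, if_neg h1]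
  push_cast; ring

lemma hgt_ge_one {M k : ℕ} (hk : k < M + 2) : 1 ≤ hgt M k := by
  rcases Nat.eq_zero_or_pos k with h | h
  · subst h; rw [hgt0]; norm_num
  rcases Nat.eq_or_lt_of_le h with h1 | h1
  · rw [← h1, hgt1]
  · have h2 : k ≠ 0 := by omega
    have h3 : k ≠ 1 := by omega
    simp only [hgt, if_neg h2, if_neg h3]
    have : (k:ℝ) ≤ (M:ℝ) + 1 := by exact_mod_cast Nat.lt_succ_iff.mp (by omega)
    linarith

lemma hgt_pos {M k : ℕ} (hk : k < M + 2) : 0 < hgt M k :=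
  lt_of_lt_of_le one_pos (hgt_ge_one hk)

lemma hgt_le {M k : ℕ} (hM : 4 ≤ M) (hk : k < M + 2) : hgt M k ≤ (M:ℝ) + 1 := by
  rcases Nat.eq_zero_or_pos k with h | h
  · subst h; rw [hgt0]; have h4 : (4:ℝ) ≤ M := by exact_mod_cast hM
    linarith
  rcases Nat.eq_or_lt_of_le h with h1 | h1
  · rw [← h1, hgt1]; have h4 : (4:ℝ) ≤ M := by exact_mod_cast hM
    linarith
  · have h2 : k ≠ 0 := by omega
    have h3 : k ≠ 1 := by omega
    simp only [hgt, if_neg h2, if_neg h3]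
    have : (2:ℝ) ≤ (k:ℝ) := by exact_mod_cast h1
    linarith

lemma mem_reg_iff {M : ℕ} {p : Plane} :
    p ∈ reg M ↔ ∃ k, k < M + 2 ∧ (k:ℝ) ≤ px p ∧ px p ≤ (k:ℝ)+1 ∧ 0 ≤ py p ∧
      py p ≤ hgt M k := by
  simp only [reg, Set.mem_iUnion, Finset.mem_range, Set.mem_setOf_eq, exists_prop]

lemma reg_closed (M : ℕ) : IsClosed (reg M) := by
  apply Set.Finite.isClosed_biUnion (Finset.finite_toSet _)
  intro k _
  have : {p : Plane | (k:ℝ) ≤ px p ∧ px p ≤ (k:ℝ)+1 ∧ 0 ≤ py p ∧ py p ≤ hgt M k}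
      = ({p : Plane | (k:ℝ) ≤ px p} ∩ {p | px p ≤ (k:ℝ)+1}) ∩
        ({p | 0 ≤ py p} ∩ {p | py p ≤ hgt M k}) := by
    ext p; simp only [Set.mem_setOf_eq, Set.mem_inter_iff]; tauto
  rw [this]
  exact (((isClosed_le continuous_const continuous_px).inter
    (isClosed_le continuous_px continuous_const)).inter
    ((isClosed_le continuous_const continuous_py).inter
    (isClosed_le continuous_py continuous_const)))

/-- Strip lemma: a horizontal run of columns from `a` to `b` at levels below all
their heights is inside the region. -/
lemma mem_reg_strip {M a b : ℕ} (hb : b < M + 2) (hab : a ≤ b) {lvl : ℝ}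
    (hlvl : ∀ k, a ≤ k → k ≤ b → lvl ≤ hgt M k) {p : Plane}
    (h1 : (a:ℝ) ≤ px p) (h2 : px p ≤ (b:ℝ)+1) (h3 : 0 ≤ py p) (h4 : py p ≤ lvl) :
    p ∈ reg M := by
  have hx0 : (0:ℝ) ≤ px p := le_trans (by exact_mod_cast Nat.zero_le a) h1
  set n := Nat.floor (px p) with hn
  have hfl : (n:ℝ) ≤ px p := Nat.floor_le hx0
  have hfu : px p < (n:ℝ)+1 := Nat.lt_floor_add_one (px p)
  rcases lt_or_ge n a with hna | han
  · refine mem_reg_iff.2 ⟨a, by omega, h1, ?_, h3, le_trans h4 (hlvl a le_rfl hab)⟩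
    have : (n:ℝ)+1 ≤ (a:ℝ) := by exact_mod_cast Nat.succ_le_of_lt hna
    linarith
  · rcases le_or_gt n b with hnb | hbn
    · exact mem_reg_iff.2 ⟨n, by omega, hfl, le_of_lt hfu, h3,
        le_trans h4 (hlvl n han hnb)⟩
    · refine mem_reg_iff.2 ⟨b, by omega, ?_, h2, h3, le_trans h4 (hlvl b hab le_rfl)⟩
      have : (b:ℝ) ≤ (n:ℝ) := by exact_mod_cast le_of_lt hbn
      linarith

/-- Membership in a single column. -/
lemma mem_reg_col {M k : ℕ} (hk : k < M + 2) {p : Plane}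
    (h1 : (k:ℝ) ≤ px p) (h2 : px p ≤ (k:ℝ)+1) (h3 : 0 ≤ py p) (h4 : py p ≤ hgt M k) :
    p ∈ reg M :=
  mem_reg_strip hk le_rfl (fun k' h h' => by have : k' = k := le_antisymm h' h; rw [this]) h1 h2 h3 h4

/-- A point strictly inside a column's x-range and above its height is outside. -/
lemma not_mem_reg_strict {M k : ℕ} {p : Plane} (h1 : (k:ℝ) < px p)
    (h2 : px p < (k:ℝ)+1) (h3 : hgt M k < py p) : p ∉ reg M := by
  intro hmem
  obtain ⟨c, hc, hc1, hc2, hc3, hc4⟩ := mem_reg_iff.1 hmem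
  have e1 : c ≤ k := by
    by_contra h
    have : (k:ℝ)+1 ≤ (c:ℝ) := by exact_mod_cast by omega
    linarith
  have e2 : k ≤ c := by
    by_contra h
    have : (c:ℝ)+1 ≤ (k:ℝ) := by exact_mod_cast by omega
    linarith
  have : c = k := le_antisymm e1 e2
  subst this; linarith

lemma not_mem_reg_left {M : ℕ} {p : Plane} (h : px p < 0) : p ∉ reg M := by
  intro hmem
  obtain ⟨c, hc, hc1, _, _, _⟩ := mem_reg_iff.1 hmem
  have : (0:ℝ) ≤ (c:ℝ) := by exact_mod_cast Nat.zero_le c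
  linarith

lemma not_mem_reg_right {M : ℕ} {p : Plane} (h : ((M:ℝ)+2) < px p) : p ∉ reg M := by
  intro hmem
  obtain ⟨c, hc, _, hc2, _, _⟩ := mem_reg_iff.1 hmem
  have : (c:ℝ)+1 ≤ (M:ℝ)+2 := by exact_mod_cast by omega
  linarith

lemma not_mem_reg_below {M : ℕ} {p : Plane} (h : py p < 0) : p ∉ reg M := by
  intro hmem
  obtain ⟨c, hc, _, _, hc3, _⟩ := mem_reg_iff.1 hmem
  linarith

lemma reg_bounds {M : ℕ} (hM : 4 ≤ M) {p : Plane} (hp : p ∈ reg M) :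
    0 ≤ px p ∧ px p ≤ (M:ℝ)+2 ∧ 0 ≤ py p ∧ py p ≤ (M:ℝ)+1 := by
  obtain ⟨c, hc, hc1, hc2, hc3, hc4⟩ := mem_reg_iff.1 hp
  have h0 : (0:ℝ) ≤ (c:ℝ) := by exact_mod_cast Nat.zero_le c
  have h1 : (c:ℝ)+1 ≤ (M:ℝ)+2 := by exact_mod_cast by omega
  exact ⟨by linarith, by linarith, hc3, le_trans hc4 (hgt_le hM hc)⟩


/-! Special points. -/

def vstar : Plane := pt 2 1
def tlv (M j : ℕ) : Plane := pt ((j:ℝ)+2) ((M:ℝ)+1-j)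
def trv (M j : ℕ) : Plane := pt ((j:ℝ)+3) ((M:ℝ)+1-j)
def brv (M : ℕ) : Plane := pt ((M:ℝ)+2) 0
def blv : Plane := pt 0 0
def tplv : Plane := pt 0 2
def stepPt (M j : ℕ) : Plane := pt ((j:ℝ)+2+1/2) ((M:ℝ)+1-j)
def spikePt : Plane := pt (1/2) 2

lemma hgt_eq_stair {M k : ℕ} (hk : 2 ≤ k) : hgt M k = (M:ℝ)+3-k := by
  have h0 : k ≠ 0 := by omega
  have h1 : k ≠ 1 := by omega
  simp only [hgt, if_neg h0, if_neg h1]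

lemma jlt_cast {M j : ℕ} (hj : j < M) : (j:ℝ) + 1 ≤ (M:ℝ) := by exact_mod_cast hj

lemma stepPt_mem {M j : ℕ} (hj : j < M) : stepPt M j ∈ reg M := by
  have hjM := jlt_cast hj
  refine mem_reg_col (k := 2+j) (by omega) ?_ ?_ ?_ ?_ <;>
    simp only [stepPt, px_pt, py_pt]
  · push_cast; linarith
  · push_cast; linarith
  · linarith
  · rw [hgt_stair]

lemma spikePt_mem {M : ℕ} : spikePt ∈ reg M := by
  refine mem_reg_col (k := 0) (by omega) ?_ ?_ ?_ ?_ <;>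
    simp only [spikePt, px_pt, py_pt, hgt0] <;> norm_num

/-! Positive visibility lemmas. -/

lemma rsee_def {S : Set Plane} {g p : Plane} :
    RSee S g p ↔ ∀ r : Plane, min (px g) (px p) ≤ px r → px r ≤ max (px g) (px p) →
      min (py g) (py p) ≤ py r → py r ≤ max (py g) (py p) → r ∈ S := by
  constructor
  · intro h r h1 h2 h3 h4; exact h ⟨h1, h2, h3, h4⟩
  · intro h r hr; exact h r hr.1 hr.2.1 hr.2.2.1 hr.2.2.2

lemma rsee_self_mem {S : Set Plane} {g p : Plane} (h : RSee S g p) : g ∈ S :=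
  h ⟨min_le_left _ _, le_max_left _ _, min_le_left _ _, le_max_left _ _⟩

lemma see_vstar_notch {M : ℕ} {p : Plane} (h1 : 1 ≤ px p) (h2 : px p ≤ 2)
    (h3 : 0 ≤ py p) (h4 : py p ≤ 1) : RSee (reg M) vstar p := by
  rw [rsee_def]
  intro r r1 r2 r3 r4
  simp only [vstar, px_pt, py_pt] at r1 r2 r3 r4
  refine mem_reg_col (k := 1) (by omega) ?_ ?_ ?_ ?_
  · have : (1:ℝ) ≤ min 2 (px p) := le_min (by norm_num) h1
    push_cast; linarith
  · have : max 2 (px p) ≤ 2 := max_le le_rfl h2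
    push_cast; linarith
  · have : (0:ℝ) ≤ min 1 (py p) := le_min (by norm_num) h3
    linarith
  · have : max 1 (py p) ≤ 1 := max_le le_rfl h4
    rw [hgt1]; linarith

lemma see_vstar_stair {M j : ℕ} (hj : j < M) {p : Plane} (h1 : 2 ≤ px p)
    (h2 : px p ≤ (j:ℝ)+3) (h3 : 0 ≤ py p) (h4 : py p ≤ (M:ℝ)+1-j) :
    RSee (reg M) vstar p := by
  rw [rsee_def]
  intro r r1 r2 r3 r4
  simp only [vstar, px_pt, py_pt] at r1 r2 r3 r4
  have hjM := jlt_cast hj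
  refine mem_reg_strip (a := 2) (b := 2+j) (by omega) (by omega) (lvl := (M:ℝ)+1-j)
    ?_ ?_ ?_ ?_ ?_
  · intro k hk1 hk2
    rw [hgt_eq_stair hk1]
    have : (k:ℝ) ≤ 2+j := by exact_mod_cast hk2
    push_cast; linarith
  · have : (2:ℝ) ≤ min 2 (px p) := le_min le_rfl h1
    push_cast; linarith
  · have : max 2 (px p) ≤ (j:ℝ)+3 := max_le (by linarith) h2
    push_cast; linarith
  · have : (0:ℝ) ≤ min 1 (py p) := le_min (by norm_num) h3
    linarith
  · have : max 1 (py p) ≤ (M:ℝ)+1-j := max_le (by linarith) h4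
    linarith

lemma py_le_two_of_left {M : ℕ} {p : Plane} (hp : p ∈ reg M) (hx : px p ≤ 1) :
    py p ≤ 2 := by
  obtain ⟨c, hc, hc1, hc2, hc3, hc4⟩ := mem_reg_iff.1 hp
  have : c ≤ 1 := by
    by_contra h
    have : (2:ℝ) ≤ (c:ℝ) := by exact_mod_cast by omega
    linarith
  interval_cases c
  · rw [hgt0] at hc4; linarith
  · rw [hgt1] at hc4; linarith

lemma see_tplv {M : ℕ} {p : Plane} (hp : p ∈ reg M) (hx : px p ≤ 1) :
    RSee (reg M) tplv p := by
  have h3 : 0 ≤ py p := (mem_reg_iff.1 hp).choose_spec.2.2.2.1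
  have h0 : 0 ≤ px p := by
    obtain ⟨c, hc, hc1, _, _, _⟩ := mem_reg_iff.1 hp
    have : (0:ℝ) ≤ (c:ℝ) := by exact_mod_cast Nat.zero_le c
    linarith
  have h2 : py p ≤ 2 := py_le_two_of_left hp hx
  rw [rsee_def]
  intro r r1 r2 r3 r4
  simp only [tplv, px_pt, py_pt] at r1 r2 r3 r4
  refine mem_reg_col (k := 0) (by omega) ?_ ?_ ?_ ?_
  · have : (0:ℝ) ≤ min 0 (px p) := le_min le_rfl h0
    push_cast; linarith
  · have : max 0 (px p) ≤ 1 := max_le (by norm_num) hx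
    push_cast; linarith
  · have : (0:ℝ) ≤ min 2 (py p) := le_min (by norm_num) h3
    linarith
  · have : max 2 (py p) ≤ 2 := max_le le_rfl h2
    rw [hgt0]; linarith

lemma see_blv_low {M : ℕ} (hM : 4 ≤ M) {p : Plane} (hp : p ∈ reg M) (hy : py p ≤ 1) :
    RSee (reg M) blv p := by
  obtain ⟨h0, h1, h2, h3⟩ := reg_bounds hM hp
  rw [rsee_def]
  intro r r1 r2 r3 r4
  simp only [blv, px_pt, py_pt] at r1 r2 r3 r4
  refine mem_reg_strip (a := 0) (b := M+1) (by omega) (by omega) (lvl := 1)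
    (fun k hk1 hk2 => hgt_ge_one (by omega)) ?_ ?_ ?_ ?_
  · have : (0:ℝ) ≤ min 0 (px p) := le_min le_rfl h0
    push_cast; linarith
  · have : max 0 (px p) ≤ (M:ℝ)+2 := max_le (by linarith) h1
    push_cast; linarith
  · have : (0:ℝ) ≤ min 0 (py p) := le_min le_rfl h2
    linarith
  · have : max 0 (py p) ≤ 1 := max_le (by norm_num) hy
    linarith

lemma see_blv_spike {M : ℕ} {p : Plane} (hp : p ∈ reg M) (hx : px p ≤ 1) :
    RSee (reg M) blv p := by
  have h3 : 0 ≤ py p := (mem_reg_iff.1 hp).choose_spec.2.2.2.1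
  have h0 : 0 ≤ px p := by
    obtain ⟨c, hc, hc1, _, _, _⟩ := mem_reg_iff.1 hp
    have : (0:ℝ) ≤ (c:ℝ) := by exact_mod_cast Nat.zero_le c
    linarith
  have h2 : py p ≤ 2 := py_le_two_of_left hp hx
  rw [rsee_def]
  intro r r1 r2 r3 r4
  simp only [blv, px_pt, py_pt] at r1 r2 r3 r4
  refine mem_reg_col (k := 0) (by omega) ?_ ?_ ?_ ?_
  · have : (0:ℝ) ≤ min 0 (px p) := le_min le_rfl h0
    push_cast; linarith
  · have : max 0 (px p) ≤ 1 := max_le (by norm_num) hx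
    push_cast; linarith
  · have : (0:ℝ) ≤ min 0 (py p) := le_min le_rfl h3
    linarith
  · have : max 0 (py p) ≤ 2 := max_le (by norm_num) h2
    rw [hgt0]; linarith

lemma see_tlv_left {M j : ℕ} (hj1 : 1 ≤ j) (hj : j < M) {p : Plane}
    (h1 : (j:ℝ)+1 ≤ px p) (h2 : px p ≤ (j:ℝ)+2) (h3 : 0 ≤ py p)
    (h4 : py p ≤ (M:ℝ)+2-j) : RSee (reg M) (tlv M j) p := by
  rw [rsee_def]
  intro r r1 r2 r3 r4
  simp only [tlv, px_pt, py_pt] at r1 r2 r3 r4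
  refine mem_reg_col (k := 1+j) (by omega) ?_ ?_ ?_ ?_
  · have : (j:ℝ)+1 ≤ min ((j:ℝ)+2) (px p) := le_min (by linarith) h1
    push_cast; linarith
  · have : max ((j:ℝ)+2) (px p) ≤ (j:ℝ)+2 := max_le le_rfl h2
    push_cast; linarith
  · have : (0:ℝ) ≤ min ((M:ℝ)+1-j) (py p) := le_min (by have := jlt_cast hj; linarith) h3
    linarith
  · have : max ((M:ℝ)+1-j) (py p) ≤ (M:ℝ)+2-j := max_le (by linarith) h4
    rw [hgt_eq_stair (by omega)]
    push_cast; linarith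

lemma see_tlv_right {M j : ℕ} (hj : j < M) {p : Plane}
    (h1 : (j:ℝ)+2 ≤ px p) (h2 : px p ≤ (j:ℝ)+3) (h3 : 0 ≤ py p)
    (h4 : py p ≤ (M:ℝ)+1-j) : RSee (reg M) (tlv M j) p := by
  rw [rsee_def]
  intro r r1 r2 r3 r4
  simp only [tlv, px_pt, py_pt] at r1 r2 r3 r4
  refine mem_reg_col (k := 2+j) (by omega) ?_ ?_ ?_ ?_
  · have : (j:ℝ)+2 ≤ min ((j:ℝ)+2) (px p) := le_min le_rfl h1
    push_cast; linarith
  · have : max ((j:ℝ)+2) (px p) ≤ (j:ℝ)+3 := max_le (by linarith) h2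
    push_cast; linarith
  · have : (0:ℝ) ≤ min ((M:ℝ)+1-j) (py p) := le_min (by have := jlt_cast hj; linarith) h3
    linarith
  · have : max ((M:ℝ)+1-j) (py p) ≤ (M:ℝ)+1-j := max_le le_rfl h4
    rw [hgt_stair]
    push_cast; linarith

/-! Visibility constraints. -/

lemma see_step_constraints {M j : ℕ} (hM : 4 ≤ M) (hj : j < M) {g : Plane}
    (hsee : RSee (reg M) g (stepPt M j)) :
    2 ≤ px g ∧ px g ≤ (j:ℝ)+3 ∧ 0 ≤ py g ∧ py g ≤ (M:ℝ)+1-j := by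
  have hg : g ∈ reg M := rsee_self_mem hsee
  obtain ⟨b0, b1, b2, b3⟩ := reg_bounds hM hg
  have hjM := jlt_cast hj
  rw [rsee_def] at hsee
  simp only [stepPt, px_pt, py_pt] at hsee
  have hy : py g ≤ (M:ℝ)+1-j := by
    by_contra hy
    push_neg at hy
    have hr := hsee (pt ((j:ℝ)+2+1/2) (py g)) (by simp [min_le_right])
      (by simp [le_max_right]) (by simp [min_le_left]) (by simp [le_max_left])
    exact not_mem_reg_strict (k := 2+j) (by push_cast; simp; linarith)
      (by push_cast; simp; linarith) (by rw [hgt_stair]; push_cast; simp; linarith) hr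
  have hx2 : 2 ≤ px g := by
    by_contra hx
    push_neg at hx
    have hr := hsee (pt (max (px g) (3/2)) ((M:ℝ)+1-j))
      (by simp only [px_pt]; exact le_trans (min_le_left _ _) (le_max_left _ _))
      (by simp only [px_pt]
          exact max_le (le_max_left _ _) (le_trans (by linarith) (le_max_right _ _)))
      (by simp only [py_pt]; exact min_le_right _ _)
      (by simp only [py_pt]; exact le_max_right _ _)
    refine not_mem_reg_strict (k := 1) ?_ ?_ ?_ hr <;>
      simp only [px_pt, py_pt]
    · push_cast
      exact lt_max_of_lt_right (by norm_num)
    · have hm : max (px g) (3/2) < 2 := max_lt hx (by norm_num)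
      push_cast
      linarith [le_max_left (px g) ((3:ℝ)/2)]
    · rw [hgt1]; linarith
  have hx3 : px g ≤ (j:ℝ)+3 := by
    rcases lt_or_ge (j+1) M with hj1 | hj1
    · by_contra hx
      push_neg at hx
      have hr := hsee (pt (min (px g) ((j:ℝ)+3+1/2)) ((M:ℝ)+1-j))
        (by simp only [px_pt]
            exact le_min (by exact le_trans (min_le_right _ _) (by linarith)) (le_trans (min_le_right _ _) (by linarith)))
        (by simp only [px_pt]; exact le_trans (min_le_left _ _) (le_max_left _ _))
        (by simp only [py_pt]; exact min_le_right _ _)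
        (by simp only [py_pt]; exact le_max_right _ _)
      refine not_mem_reg_strict (k := 2+(j+1)) ?_ ?_ ?_ hr <;>
        simp only [px_pt, py_pt]
      · have hm : (j:ℝ)+3 < min (px g) ((j:ℝ)+3+1/2) := lt_min hx (by linarith)
        push_cast
        linarith [min_le_right (px g) ((j:ℝ)+3+1/2)]
      · push_cast
        exact lt_of_le_of_lt (min_le_right _ _) (by linarith)
      · rw [hgt_stair]; push_cast; linarith
    · have : j = M - 1 := by omega
      have : (j:ℝ) = (M:ℝ) - 1 := by
        subst this
        have : (1:ℕ) ≤ M := by omega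
        push_cast [this]
        ring
      linarith
  exact ⟨hx2, hx3, b2, hy⟩

lemma see_spike_constraints {M : ℕ} {g : Plane}
    (hsee : RSee (reg M) g spikePt) :
    0 ≤ px g ∧ px g ≤ 1 ∧ 0 ≤ py g ∧ py g ≤ 2 := by
  have hg : g ∈ reg M := rsee_self_mem hsee
  have h0 : 0 ≤ px g := by
    obtain ⟨c, hc, hc1, _, _, _⟩ := mem_reg_iff.1 hg
    have : (0:ℝ) ≤ (c:ℝ) := by exact_mod_cast Nat.zero_le c
    linarith
  have h3 : 0 ≤ py g := (mem_reg_iff.1 hg).choose_spec.2.2.2.1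
  rw [rsee_def] at hsee
  simp only [spikePt, px_pt, py_pt] at hsee
  have hx : px g ≤ 1 := by
    by_contra hx
    push_neg at hx
    have hr := hsee (pt (min (px g) (3/2)) 2)
      (by simp only [px_pt]
          exact le_min (le_trans (min_le_right _ _) (by linarith)) (le_trans (min_le_right _ _) (by norm_num)))
      (by simp only [px_pt]; exact le_trans (min_le_left _ _) (le_max_left _ _))
      (by simp only [py_pt]; exact le_trans (min_le_right _ _) (by norm_num))
      (by simp only [py_pt]; exact le_max_right _ _)
    refine not_mem_reg_strict (k := 1) ?_ ?_ ?_ hr <;>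
      simp only [px_pt, py_pt]
    · push_cast
      exact lt_min hx (by norm_num)
    · push_cast
      exact lt_of_le_of_lt (min_le_right _ _) (by norm_num)
    · rw [hgt1]; norm_num
  exact ⟨h0, hx, h3, py_le_two_of_left hg hx⟩

/-! The histogram. -/

def hist (M : ℕ) (hM : 4 ≤ M) : Histogram where
  n := M + 2
  npos := by omega
  xs := fun i => (i : ℕ)
  mono := fun i j hij => by
    have : (i:ℕ) < (j:ℕ) := hij
    dsimp only
    exact_mod_cast this
  h := fun i => hgt M i
  hpos := fun i => hgt_pos i.2
  adj_ne := by
    intro i j hij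
    show hgt M (i:ℕ) ≠ hgt M (j:ℕ)
    rcases Nat.eq_zero_or_pos (i:ℕ) with h0 | h0
    · rw [h0] at hij ⊢
      rw [show ((j:ℕ)) = 1 by omega, hgt0, hgt1]
      norm_num
    rcases Nat.eq_or_lt_of_le h0 with h1 | h1
    · rw [← h1] at hij ⊢
      rw [show ((j:ℕ)) = 2 by omega, hgt1, hgt_eq_stair (by omega)]
      push_cast
      have : 4 ≤ (M:ℝ) := by exact_mod_cast hM
      intro hcon
      linarith
    · rw [hgt_eq_stair (by omega : 2 ≤ (i:ℕ)), hgt_eq_stair (by omega : 2 ≤ (j:ℕ)),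
        show ((j:ℕ):ℝ) = ((i:ℕ):ℝ)+1 by exact_mod_cast hij.symm]
      intro hcon
      linarith

lemma hist_region (M : ℕ) (hM : 4 ≤ M) : (hist M hM).region = reg M := by
  ext p
  simp only [Histogram.region, Set.mem_iUnion, Set.mem_setOf_eq, hist, mem_reg_iff]
  constructor
  · rintro ⟨i, h1, h2, h3, h4⟩
    refine ⟨(i:ℕ), i.2, ?_, ?_, h3, h4⟩
    · simpa [Fin.coe_castSucc] using h1
    · simpa [Fin.val_succ] using h2
  · rintro ⟨k, hk, h1, h2, h3, h4⟩
    refine ⟨⟨k, hk⟩, ?_, ?_, h3, h4⟩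
    · simpa [Fin.coe_castSucc] using h1
    · simpa [Fin.val_succ] using h2


/-! Interior, frontier, vertices. -/

lemma abs_px_le_dist (p q : Plane) : |px p - px q| ≤ dist p q := by
  rw [dist_plane]; linarith [abs_nonneg (py p - py q)]

lemma abs_py_le_dist (p q : Plane) : |py p - py q| ≤ dist p q := by
  rw [dist_plane]; linarith [abs_nonneg (px p - px q)]

lemma box_subset_interior {M a b : ℕ} (hb : b < M + 2) (hab : a ≤ b) {lvl : ℝ}
    (hlvl : ∀ k, a ≤ k → k ≤ b → lvl ≤ hgt M k) {p : Plane}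
    (h1 : (a:ℝ) < px p) (h2 : px p < (b:ℝ)+1) (h3 : 0 < py p) (h4 : py p < lvl) :
    p ∈ interior (reg M) := by
  have hopen : IsOpen (({q : Plane | (a:ℝ) < px q} ∩ {q | px q < (b:ℝ)+1}) ∩
      ({q | 0 < py q} ∩ {q | py q < lvl})) :=
    (((isOpen_lt continuous_const continuous_px).inter
      (isOpen_lt continuous_px continuous_const)).inter
      ((isOpen_lt continuous_const continuous_py).inter
      (isOpen_lt continuous_py continuous_const)))
  have hsub : (({q : Plane | (a:ℝ) < px q} ∩ {q | px q < (b:ℝ)+1}) ∩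
      ({q | 0 < py q} ∩ {q | py q < lvl})) ⊆ reg M := by
    rintro q ⟨⟨hq1, hq2⟩, hq3, hq4⟩
    exact mem_reg_strip hb hab hlvl (le_of_lt hq1) (le_of_lt hq2) (le_of_lt hq3)
      (le_of_lt hq4)
  exact interior_maximal hsub hopen ⟨⟨h1, h2⟩, h3, h4⟩

lemma not_vertex_interior {M : ℕ} {p : Plane} (hp : p ∈ interior (reg M)) :
    ¬ IsVertex (reg M) p := by
  rintro ⟨hf, -⟩
  rw [(reg_closed M).frontier_eq] at hf
  exact hf.2 hp

lemma frontier_mem_reg {M : ℕ} {q : Plane} (h : q ∈ frontier (reg M)) : q ∈ reg M :=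
  (reg_closed M).closure_eq ▸ frontier_subset_closure h

lemma not_vertex_of_local {M : ℕ} {v : Plane} (a b c : ℝ) (hab : a ≠ 0 ∨ b ≠ 0)
    (ε : ℝ) (hε : 0 < ε)
    (h : ∀ q : Plane, dist q v < ε →
      a * px q + b * py q = c ∨ q ∈ interior (reg M) ∨ q ∉ reg M) :
    ¬ IsVertex (reg M) v := by
  rintro ⟨hf, hcond⟩
  refine hcond ε hε ⟨a, b, c, hab, ?_⟩
  rintro q ⟨hqf, hqb⟩
  rcases h q (Metric.mem_ball.mp hqb) with h' | h' | h'
  · exact h'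
  · exact absurd h' (by rw [(reg_closed M).frontier_eq] at hqf; exact hqf.2)
  · exact absurd (frontier_mem_reg hqf) h'

lemma mem_frontier_dir {M : ℕ} {q : Plane} (hin : q ∈ reg M) (w1 w2 δmax : ℝ)
    (hδ : 0 < δmax)
    (hout : ∀ δ : ℝ, 0 < δ → δ ≤ δmax → pt (px q + δ*w1) (py q + δ*w2) ∉ reg M) :
    q ∈ frontier (reg M) := by
  rw [(reg_closed M).frontier_eq]
  refine ⟨hin, fun hint => ?_⟩
  obtain ⟨ε, hε, hball⟩ := Metric.isOpen_iff.mp isOpen_interior q hint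
  set X := |w1| + |w2| with hX
  have hX0 : 0 ≤ X := by positivity
  set δ := min δmax (ε / (X + 1)) with hδ'
  have hδ0 : 0 < δ := lt_min hδ (div_pos hε (by positivity))
  refine hout δ hδ0 (min_le_left _ _) (interior_subset (hball ?_))
  rw [Metric.mem_ball, dist_plane]
  simp only [px_pt, py_pt, add_sub_cancel_left]
  have h1 : |δ*w1| + |δ*w2| = δ * X := by
    rw [abs_mul, abs_mul, abs_of_pos hδ0, hX]; ring
  rw [h1]
  have h2 : δ ≤ ε / (X + 1) := min_le_right _ _
  have h3 : δ * X ≤ ε / (X + 1) * X := mul_le_mul_of_nonneg_right h2 hX0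
  have h4 : ε / (X + 1) * X < ε := by
    rw [div_mul_eq_mul_div, div_lt_iff₀ (by positivity)]
    nlinarith
  exact lt_of_le_of_lt h3 h4

lemma isVertex_corner {M : ℕ} {v : Plane} (hvf : v ∈ frontier (reg M))
    (t s u0 : ℝ) (ht : t ≠ 0) (hs : s ≠ 0) (hu : 0 < u0)
    (h1 : ∀ u : ℝ, 0 < u → u ≤ u0 → pt (px v + u*t) (py v) ∈ frontier (reg M))
    (h2 : ∀ u : ℝ, 0 < u → u ≤ u0 → pt (px v) (py v + u*s) ∈ frontier (reg M)) :
    IsVertex (reg M) v := by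
  refine ⟨hvf, fun ε hε => ?_⟩
  rintro ⟨a, b, c, hab, hline⟩
  set X := |t| + |s| with hX
  have hX0 : 0 ≤ X := by positivity
  set u := min u0 (ε / (X + 1)) with hu'
  have hu0 : 0 < u := lt_min hu (div_pos hε (by positivity))
  have huu : u ≤ u0 := min_le_left _ _
  have hue : u * X < ε := by
    have h2' : u ≤ ε / (X + 1) := min_le_right _ _
    have h3 : u * X ≤ ε / (X + 1) * X := mul_le_mul_of_nonneg_right h2' hX0
    have h4 : ε / (X + 1) * X < ε := by
      rw [div_mul_eq_mul_div, div_lt_iff₀ (by positivity)]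
      nlinarith
    exact lt_of_le_of_lt h3 h4
  have hd1 : dist (pt (px v + u*t) (py v)) v < ε := by
    rw [dist_plane]
    simp only [px_pt, py_pt, add_sub_cancel_left, sub_self, abs_zero, add_zero]
    calc |u*t| = u * |t| := by rw [abs_mul, abs_of_pos hu0]
      _ ≤ u * X := by
          apply mul_le_mul_of_nonneg_left _ (le_of_lt hu0)
          rw [hX]; linarith [abs_nonneg s]
      _ < ε := hue
  have hd2 : dist (pt (px v) (py v + u*s)) v < ε := by
    rw [dist_plane]
    simp only [px_pt, py_pt, add_sub_cancel_left, sub_self, abs_zero, zero_add]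
    calc |u*s| = u * |s| := by rw [abs_mul, abs_of_pos hu0]
      _ ≤ u * X := by
          apply mul_le_mul_of_nonneg_left _ (le_of_lt hu0)
          rw [hX]; linarith [abs_nonneg t]
      _ < ε := hue
  have e0 : a * px v + b * py v = c :=
    hline v ⟨hvf, Metric.mem_ball.mpr (by rw [dist_self]; exact hε)⟩
  have e1 := hline _ ⟨h1 u hu0 huu, Metric.mem_ball.mpr hd1⟩
  have e2 := hline _ ⟨h2 u hu0 huu, Metric.mem_ball.mpr hd2⟩
  simp only [px_pt, py_pt] at e1 e2
  have ha : a = 0 := by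
    have hz : a * (u * t) = 0 := by nlinarith [e0, e1]
    rcases mul_eq_zero.mp hz with h | h
    · exact h
    · rcases mul_eq_zero.mp h with h' | h'
      · exact absurd h' (ne_of_gt hu0)
      · exact absurd h' ht
  have hb : b = 0 := by
    have hz : b * (u * s) = 0 := by nlinarith [e0, e2]
    rcases mul_eq_zero.mp hz with h | h
    · exact h
    · rcases mul_eq_zero.mp h with h' | h'
      · exact absurd h' (ne_of_gt hu0)
      · exact absurd h' hs
  rcases hab with h | h
  · exact h ha
  · exact h hb


/-! Non-vertex lemmas for edge-interior points. -/

lemma nv_bottom {M : ℕ} {x : ℝ} (h1 : 0 < x) (h2 : x < (M:ℝ)+2) :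
    ¬ IsVertex (reg M) (pt x 0) := by
  apply not_vertex_of_local 0 1 0 (Or.inr one_ne_zero)
    (min (min x ((M:ℝ)+2-x)) 1) (lt_min (lt_min h1 (by linarith)) one_pos)
  intro q hd
  have hdx := lt_of_le_of_lt (abs_px_le_dist q (pt x 0)) hd
  have hdy := lt_of_le_of_lt (abs_py_le_dist q (pt x 0)) hd
  simp only [px_pt, py_pt, sub_zero] at hdx hdy
  rw [abs_lt] at hdx hdy
  have hε1 : min (min x ((M:ℝ)+2-x)) 1 ≤ x := le_trans (min_le_left _ _) (min_le_left _ _)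
  have hε2 : min (min x ((M:ℝ)+2-x)) 1 ≤ (M:ℝ)+2-x :=
    le_trans (min_le_left _ _) (min_le_right _ _)
  have hε3 : min (min x ((M:ℝ)+2-x)) 1 ≤ 1 := min_le_right _ _
  rcases lt_trichotomy (py q) 0 with hy | hy | hy
  · exact Or.inr (Or.inr (not_mem_reg_below hy))
  · exact Or.inl (by rw [hy]; ring)
  · refine Or.inr (Or.inl (box_subset_interior (a := 0) (b := M+1) (by omega) (by omega)
      (lvl := 1) (fun k hk1 hk2 => hgt_ge_one (by omega)) ?_ ?_ hy ?_))
    · push_cast; linarith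
    · push_cast; linarith
    · linarith

lemma nv_top {M k : ℕ} (hk : k < M + 2) {x : ℝ} (h1 : (k:ℝ) < x) (h2 : x < (k:ℝ)+1) :
    ¬ IsVertex (reg M) (pt x (hgt M k)) := by
  have hh := hgt_pos (M := M) hk
  apply not_vertex_of_local 0 1 (hgt M k) (Or.inr one_ne_zero)
    (min (min (x-(k:ℝ)) ((k:ℝ)+1-x)) (hgt M k)) (lt_min (lt_min (by linarith) (by linarith)) hh)
  intro q hd
  have hdx := lt_of_le_of_lt (abs_px_le_dist q (pt x (hgt M k))) hd
  have hdy := lt_of_le_of_lt (abs_py_le_dist q (pt x (hgt M k))) hd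
  simp only [px_pt, py_pt] at hdx hdy
  rw [abs_lt] at hdx hdy
  have hε1 : min (min (x-(k:ℝ)) ((k:ℝ)+1-x)) (hgt M k) ≤ x-(k:ℝ) :=
    le_trans (min_le_left _ _) (min_le_left _ _)
  have hε2 : min (min (x-(k:ℝ)) ((k:ℝ)+1-x)) (hgt M k) ≤ (k:ℝ)+1-x :=
    le_trans (min_le_left _ _) (min_le_right _ _)
  have hε3 : min (min (x-(k:ℝ)) ((k:ℝ)+1-x)) (hgt M k) ≤ hgt M k := min_le_right _ _
  rcases lt_trichotomy (py q) (hgt M k) with hy | hy | hy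
  · refine Or.inr (Or.inl (box_subset_interior (a := k) (b := k) hk le_rfl
      (lvl := hgt M k) (fun k' hk1 hk2 => by rw [le_antisymm hk2 hk1]) ?_ ?_ ?_ hy))
    · linarith
    · linarith
    · linarith
  · exact Or.inl (by rw [hy]; ring)
  · refine Or.inr (Or.inr (not_mem_reg_strict (k := k) ?_ ?_ hy))
    · linarith
    · linarith

lemma nv_x2 {M : ℕ} (hM : 4 ≤ M) {y : ℝ} (h1 : 1 < y) (h2 : y < (M:ℝ)+1) :
    ¬ IsVertex (reg M) (pt 2 y) := by
  apply not_vertex_of_local 1 0 2 (Or.inl one_ne_zero)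
    (min (min (y-1) ((M:ℝ)+1-y)) 1) (lt_min (lt_min (by linarith) (by linarith)) one_pos)
  intro q hd
  have hdx := lt_of_le_of_lt (abs_px_le_dist q (pt 2 y)) hd
  have hdy := lt_of_le_of_lt (abs_py_le_dist q (pt 2 y)) hd
  simp only [px_pt, py_pt] at hdx hdy
  rw [abs_lt] at hdx hdy
  have hε1 : min (min (y-1) ((M:ℝ)+1-y)) 1 ≤ y-1 :=
    le_trans (min_le_left _ _) (min_le_left _ _)
  have hε2 : min (min (y-1) ((M:ℝ)+1-y)) 1 ≤ (M:ℝ)+1-y :=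
    le_trans (min_le_left _ _) (min_le_right _ _)
  have hε3 : min (min (y-1) ((M:ℝ)+1-y)) 1 ≤ 1 := min_le_right _ _
  rcases lt_trichotomy (px q) 2 with hx | hx | hx
  · refine Or.inr (Or.inr (not_mem_reg_strict (k := 1) ?_ ?_ ?_))
    · push_cast; linarith
    · push_cast; linarith
    · rw [hgt1]; linarith
  · exact Or.inl (by rw [hx]; ring)
  · refine Or.inr (Or.inl (box_subset_interior (a := 2) (b := 2) (by omega) le_rfl
      (lvl := (M:ℝ)+1) (fun k' hk1 hk2 => by
        rw [le_antisymm hk2 hk1, hgt_eq_stair le_rfl]; push_cast; linarith) ?_ ?_ ?_ ?_))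
    · push_cast; linarith
    · push_cast; linarith
    · linarith
    · linarith

lemma nv_vert {M i : ℕ} (hi : i + 2 ≤ M) {y : ℝ} (h1 : (M:ℝ)-i < y)
    (h2 : y < (M:ℝ)+1-i) : ¬ IsVertex (reg M) (pt ((i:ℝ)+3) y) := by
  have hiM : (i:ℝ) + 2 ≤ (M:ℝ) := by exact_mod_cast hi
  apply not_vertex_of_local 1 0 ((i:ℝ)+3) (Or.inl one_ne_zero)
    (min (min (y-((M:ℝ)-i)) ((M:ℝ)+1-i-y)) 1) (lt_min (lt_min (by linarith) (by linarith)) one_pos)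
  intro q hd
  have hdx := lt_of_le_of_lt (abs_px_le_dist q (pt ((i:ℝ)+3) y)) hd
  have hdy := lt_of_le_of_lt (abs_py_le_dist q (pt ((i:ℝ)+3) y)) hd
  simp only [px_pt, py_pt] at hdx hdy
  rw [abs_lt] at hdx hdy
  have hε1 : min (min (y-((M:ℝ)-i)) ((M:ℝ)+1-i-y)) 1 ≤ y-((M:ℝ)-i) :=
    le_trans (min_le_left _ _) (min_le_left _ _)
  have hε2 : min (min (y-((M:ℝ)-i)) ((M:ℝ)+1-i-y)) 1 ≤ (M:ℝ)+1-i-y :=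
    le_trans (min_le_left _ _) (min_le_right _ _)
  have hε3 : min (min (y-((M:ℝ)-i)) ((M:ℝ)+1-i-y)) 1 ≤ 1 := min_le_right _ _
  rcases lt_trichotomy (px q) ((i:ℝ)+3) with hx | hx | hx
  · refine Or.inr (Or.inl (box_subset_interior (a := 2+i) (b := 2+i) (by omega) le_rfl
      (lvl := (M:ℝ)+1-i) (fun k' hk1 hk2 => by
        rw [le_antisymm hk2 hk1, hgt_eq_stair (by omega)]; push_cast; linarith) ?_ ?_ ?_ ?_))
    · push_cast; linarith
    · push_cast; linarith
    · linarith
    · linarith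
  · exact Or.inl (by rw [hx]; ring)
  · refine Or.inr (Or.inr (not_mem_reg_strict (k := 2+(i+1)) ?_ ?_ ?_))
    · push_cast; linarith
    · push_cast; linarith
    · rw [hgt_stair]; push_cast; linarith

lemma nv_right {M : ℕ} (hM : 4 ≤ M) {y : ℝ} (h1 : 0 < y) (h2 : y < 2) :
    ¬ IsVertex (reg M) (pt ((M:ℝ)+2) y) := by
  apply not_vertex_of_local 1 0 ((M:ℝ)+2) (Or.inl one_ne_zero)
    (min (min y (2-y)) 1) (lt_min (lt_min h1 (by linarith)) one_pos)
  intro q hd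
  have hdx := lt_of_le_of_lt (abs_px_le_dist q (pt ((M:ℝ)+2) y)) hd
  have hdy := lt_of_le_of_lt (abs_py_le_dist q (pt ((M:ℝ)+2) y)) hd
  simp only [px_pt, py_pt] at hdx hdy
  rw [abs_lt] at hdx hdy
  have hε1 : min (min y (2-y)) 1 ≤ y := le_trans (min_le_left _ _) (min_le_left _ _)
  have hε2 : min (min y (2-y)) 1 ≤ 2-y := le_trans (min_le_left _ _) (min_le_right _ _)
  have hε3 : min (min y (2-y)) 1 ≤ 1 := min_le_right _ _
  rcases lt_trichotomy (px q) ((M:ℝ)+2) with hx | hx | hx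
  · refine Or.inr (Or.inl (box_subset_interior (a := M+1) (b := M+1) (by omega) le_rfl
      (lvl := 2) (fun k' hk1 hk2 => by
        rw [le_antisymm hk2 hk1, hgt_eq_stair (by omega)]; push_cast; linarith) ?_ ?_ ?_ ?_))
    · push_cast; linarith
    · push_cast; linarith
    · linarith
    · linarith
  · exact Or.inl (by rw [hx]; ring)
  · exact Or.inr (Or.inr (not_mem_reg_right hx))


/-! The corners we use are vertices. -/

lemma blv_mem {M : ℕ} : blv ∈ reg M := by
  refine mem_reg_col (k := 0) (by omega) ?_ ?_ ?_ ?_ <;>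
    simp only [blv, px_pt, py_pt, hgt0] <;> norm_num

lemma tplv_mem {M : ℕ} : tplv ∈ reg M := by
  refine mem_reg_col (k := 0) (by omega) ?_ ?_ ?_ ?_ <;>
    simp only [tplv, px_pt, py_pt, hgt0] <;> norm_num

lemma vstar_mem {M : ℕ} : vstar ∈ reg M := by
  refine mem_reg_col (k := 1) (by omega) ?_ ?_ ?_ ?_ <;>
    simp only [vstar, px_pt, py_pt, hgt1] <;> norm_num

lemma tlv_mem {M j : ℕ} (hj : j < M) : tlv M j ∈ reg M := by
  have hjM := jlt_cast hj
  refine mem_reg_col (k := 2+j) (by omega) ?_ ?_ ?_ ?_ <;>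
    simp only [tlv, px_pt, py_pt]
  · push_cast; linarith
  · push_cast; linarith
  · linarith
  · rw [hgt_stair]

lemma vertex_blv {M : ℕ} : IsVertex (reg M) blv := by
  have hf : blv ∈ frontier (reg M) := by
    refine mem_frontier_dir blv_mem (-1) (-1) 1 one_pos (fun δ hδ hδ1 => ?_)
    apply not_mem_reg_left
    simp only [blv, px_pt, py_pt]
    linarith
  refine isVertex_corner hf 1 1 (1/2) one_ne_zero one_ne_zero (by norm_num) ?_ ?_
  · intro u hu hu2
    simp only [blv, px_pt, py_pt, mul_one, zero_add]
    have hin : pt u 0 ∈ reg M := by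
      refine mem_reg_col (k := 0) (by omega) ?_ ?_ ?_ ?_ <;>
        simp only [px_pt, py_pt, hgt0, Nat.cast_zero] <;> try norm_num
      · linarith
      · linarith
    refine mem_frontier_dir hin 0 (-1) 1 one_pos (fun δ hδ hδ1 => ?_)
    apply not_mem_reg_below
    simp only [px_pt, py_pt]
    linarith
  · intro u hu hu2
    simp only [blv, px_pt, py_pt, mul_one, zero_add]
    have hin : pt 0 u ∈ reg M := by
      refine mem_reg_col (k := 0) (by omega) ?_ ?_ ?_ ?_ <;>
        simp only [px_pt, py_pt, hgt0, Nat.cast_zero] <;> try norm_num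
      · linarith
      · linarith
    refine mem_frontier_dir hin (-1) 0 1 one_pos (fun δ hδ hδ1 => ?_)
    apply not_mem_reg_left
    simp only [px_pt, py_pt]
    linarith

lemma vertex_tplv {M : ℕ} : IsVertex (reg M) tplv := by
  have hf : tplv ∈ frontier (reg M) := by
    refine mem_frontier_dir tplv_mem (-1) 0 1 one_pos (fun δ hδ hδ1 => ?_)
    apply not_mem_reg_left
    simp only [tplv, px_pt, py_pt]
    linarith
  refine isVertex_corner hf 1 (-1) (1/2) one_ne_zero (by norm_num) (by norm_num) ?_ ?_
  · intro u hu hu2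
    simp only [tplv, px_pt, py_pt, mul_one, zero_add]
    have hin : pt u 2 ∈ reg M := by
      refine mem_reg_col (k := 0) (by omega) ?_ ?_ ?_ ?_ <;>
        simp only [px_pt, py_pt, hgt0, Nat.cast_zero] <;> try norm_num
      · linarith
      · linarith
    refine mem_frontier_dir hin 0 1 1 one_pos (fun δ hδ hδ1 => ?_)
    refine not_mem_reg_strict (k := 0) ?_ ?_ ?_ <;>
      simp only [px_pt, py_pt, hgt0, Nat.cast_zero]
    · linarith
    · linarith
    · linarith
  · intro u hu hu2
    simp only [tplv, px_pt, py_pt]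
    have hin : pt 0 (2 + u * (-1)) ∈ reg M := by
      refine mem_reg_col (k := 0) (by omega) ?_ ?_ ?_ ?_ <;>
        simp only [px_pt, py_pt, hgt0, Nat.cast_zero] <;> try norm_num
      · linarith
      · linarith
    refine mem_frontier_dir hin (-1) 0 1 one_pos (fun δ hδ hδ1 => ?_)
    apply not_mem_reg_left
    simp only [px_pt, py_pt]
    linarith

lemma vertex_vstar {M : ℕ} (hM : 4 ≤ M) : IsVertex (reg M) vstar := by
  have hf : vstar ∈ frontier (reg M) := by
    refine mem_frontier_dir vstar_mem (-1) 1 (1/2) (by norm_num) (fun δ hδ hδ1 => ?_)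
    refine not_mem_reg_strict (k := 1) ?_ ?_ ?_ <;>
      simp only [vstar, px_pt, py_pt, hgt1, Nat.cast_one]
    · linarith
    · linarith
    · linarith
  refine isVertex_corner hf (-1) 1 (1/2) (by norm_num) one_ne_zero (by norm_num) ?_ ?_
  · intro u hu hu2
    simp only [vstar, px_pt, py_pt]
    have hin : pt (2 + u * (-1)) 1 ∈ reg M := by
      refine mem_reg_col (k := 1) (by omega) ?_ ?_ ?_ ?_ <;>
        simp only [px_pt, py_pt, hgt1, Nat.cast_one] <;> try norm_num
      · linarith
      · linarith
    refine mem_frontier_dir hin 0 1 (1/2) (by norm_num) (fun δ hδ hδ1 => ?_)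
    refine not_mem_reg_strict (k := 1) ?_ ?_ ?_ <;>
      simp only [px_pt, py_pt, hgt1, Nat.cast_one]
    · linarith
    · linarith
    · linarith
  · intro u hu hu2
    simp only [vstar, px_pt, py_pt, mul_one]
    have hMr : (4:ℝ) ≤ (M:ℝ) := by exact_mod_cast hM
    have hin : pt 2 (1 + u) ∈ reg M := by
      refine mem_reg_col (k := 2) (by omega) ?_ ?_ ?_ ?_ <;>
        simp only [px_pt, py_pt, Nat.cast_ofNat] <;> try norm_num
      · linarith
      · rw [hgt_eq_stair le_rfl]; push_cast; linarith
    refine mem_frontier_dir hin (-1) 0 (1/2) (by norm_num) (fun δ hδ hδ1 => ?_)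
    refine not_mem_reg_strict (k := 1) ?_ ?_ ?_ <;>
      simp only [px_pt, py_pt, hgt1, Nat.cast_one]
    · linarith
    · linarith
    · linarith

lemma vertex_tlv {M j : ℕ} (hj1 : 1 ≤ j) (hj : j < M) : IsVertex (reg M) (tlv M j) := by
  have hjM := jlt_cast hj
  have hf : tlv M j ∈ frontier (reg M) := by
    refine mem_frontier_dir (tlv_mem hj) 1 1 (1/2) (by norm_num) (fun δ hδ hδ1 => ?_)
    refine not_mem_reg_strict (k := 2+j) ?_ ?_ ?_ <;>
      simp only [tlv, px_pt, py_pt]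
    · push_cast; linarith
    · push_cast; linarith
    · rw [hgt_stair]; linarith
  refine isVertex_corner hf 1 1 (1/2) one_ne_zero one_ne_zero (by norm_num) ?_ ?_
  · intro u hu hu2
    simp only [tlv, px_pt, py_pt, mul_one]
    have hin : pt ((j:ℝ)+2+u) ((M:ℝ)+1-j) ∈ reg M := by
      refine mem_reg_col (k := 2+j) (by omega) ?_ ?_ ?_ ?_ <;>
        simp only [px_pt, py_pt]
      · push_cast; linarith
      · push_cast; linarith
      · linarith
      · rw [hgt_stair]
    refine mem_frontier_dir hin 0 1 (1/2) (by norm_num) (fun δ hδ hδ1 => ?_)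
    refine not_mem_reg_strict (k := 2+j) ?_ ?_ ?_ <;>
      simp only [px_pt, py_pt]
    · push_cast; linarith
    · push_cast; linarith
    · rw [hgt_stair]; linarith
  · intro u hu hu2
    simp only [tlv, px_pt, py_pt, mul_one]
    have hin : pt ((j:ℝ)+2) ((M:ℝ)+1-j+u) ∈ reg M := by
      refine mem_reg_col (k := 1+j) (by omega) ?_ ?_ ?_ ?_ <;>
        simp only [px_pt, py_pt]
      · push_cast; linarith
      · push_cast; linarith
      · linarith
      · rw [hgt_eq_stair (by omega)]; push_cast; linarith
    refine mem_frontier_dir hin 1 0 (1/2) (by norm_num) (fun δ hδ hδ1 => ?_)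
    refine not_mem_reg_strict (k := 2+j) ?_ ?_ ?_ <;>
      simp only [px_pt, py_pt]
    · push_cast; linarith
    · push_cast; linarith
    · rw [hgt_stair]; linarith


/-! Classification of vertices that can see a step top. -/

lemma reg_y_at_integer {M k : ℕ} (hk3 : 3 ≤ k) {p : Plane} (hp : p ∈ reg M)
    (hx : px p = (k:ℝ)) : py p ≤ (M:ℝ)+4-k := by
  obtain ⟨c, hc, hc1, hc2, hc3, hc4⟩ := mem_reg_iff.1 hp
  rw [hx] at hc1 hc2
  have hck : c ≤ k := by exact_mod_cast hc1
  have hkc : k ≤ c + 1 := by exact_mod_cast hc2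
  have hkr : (k:ℝ) ≥ 3 := by exact_mod_cast hk3
  rcases Nat.eq_or_lt_of_le hck with h | h
  · subst h
    rw [hgt_eq_stair (by omega)] at hc4
    linarith
  · have : c = k - 1 := by omega
    subst this
    rw [hgt_eq_stair (by omega)] at hc4
    have : ((k - 1 : ℕ) : ℝ) = (k:ℝ) - 1 := by
      have : (1:ℕ) ≤ k := by omega
      push_cast [this]
      ring
    rw [this] at hc4
    linarith

lemma step_guard_cases {M j : ℕ} (hM : 4 ≤ M) (hj : j < M) {g : Plane}
    (hv : IsVertex (reg M) g) (hsee : RSee (reg M) g (stepPt M j)) :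
    g = vstar ∨ g = tlv M j ∨ (j+1 < M ∧ g = tlv M (j+1)) ∨ g = trv M j ∨
      (j = M-1 ∧ g = brv M) := by
  obtain ⟨hx2, hx3, hy0, hy1⟩ := see_step_constraints hM hj hsee
  have hg : g ∈ reg M := frontier_mem_reg hv.1
  have hjM := jlt_cast hj
  have hMr : (4:ℝ) ≤ (M:ℝ) := by exact_mod_cast hM
  obtain ⟨b0, b1, b2, b3⟩ := reg_bounds hM hg
  rcases eq_or_lt_of_le hy0 with hy | hy
  · -- on the bottom edge
    rcases lt_or_eq_of_le (le_trans hx3 (by linarith : (j:ℝ)+3 ≤ (M:ℝ)+2)) with hx | hx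
    · exfalso
      have hgeq : g = pt (px g) 0 := by
        refine pt_ext ?_ ?_ <;> simp [← hy]
      exact nv_bottom (by linarith) hx (hgeq ▸ hv)
    · -- bottom right corner
      have hjm : j = M - 1 := by
        have h1 : (M:ℝ) + 2 ≤ (j:ℝ) + 3 := by rw [← hx]; exact hx3
        have h2 : (M:ℝ) ≤ (j:ℝ) + 1 := by linarith
        have : M ≤ j + 1 := by exact_mod_cast h2
        omega
      refine Or.inr (Or.inr (Or.inr (Or.inr ⟨hjm, ?_⟩)))
      refine pt_ext ?_ ?_ <;> simp [brv, ← hy, hx]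
  · -- py g > 0
    set n := Nat.floor (px g) with hn
    have hfl : (n:ℝ) ≤ px g := Nat.floor_le b0
    have hfu : px g < (n:ℝ)+1 := Nat.lt_floor_add_one (px g)
    rcases eq_or_lt_of_le hfl with hfx | hfx
    · -- px g is the integer n
      have hn2 : 2 ≤ n := by
        have : (2:ℝ) ≤ (n:ℝ) := by rw [hfx]; exact hx2
        exact_mod_cast this
      have hnj : n ≤ j + 3 := by
        have : (n:ℝ) ≤ (j:ℝ)+3 := by rw [hfx]; exact hx3
        exact_mod_cast this
      rcases Nat.eq_or_lt_of_le hn2 with hn2' | hn3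
      · -- px g = 2
        have hpx : px g = 2 := by rw [← hfx, ← hn2']; norm_num
        rcases lt_trichotomy (py g) 1 with hy1' | hy1' | hy1'
        · exfalso
          refine not_vertex_interior (box_subset_interior (a := 1) (b := 2) (by omega)
            (by omega) (lvl := 1) (fun k hk1 hk2 => hgt_ge_one (by omega)) ?_ ?_ hy ?_) hv
          · push_cast; linarith
          · push_cast; linarith
          · exact hy1'
        · exact Or.inl (pt_ext (by simp [vstar, hpx]) (by simp [vstar, hy1']))
        · rcases lt_trichotomy (py g) ((M:ℝ)+1) with hyM | hyM | hyM
          · exfalso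
            have hgeq : g = pt 2 (py g) := pt_ext (by simp [hpx]) (by simp)
            exact nv_x2 hM hy1' hyM (hgeq ▸ hv)
          · -- g = tlv M 0 and j = 0
            have hj0 : j = 0 := by
              rw [hyM] at hy1
              have : (j:ℝ) ≤ 0 := by linarith
              have : j ≤ 0 := by exact_mod_cast this
              omega
            refine Or.inr (Or.inl ?_)
            refine pt_ext ?_ ?_ <;> simp [tlv, hpx, hyM, hj0]
          · exfalso; linarith
      · -- px g = n ≥ 3, write i = n - 3
        obtain ⟨i, hni⟩ : ∃ i, n = i + 3 := ⟨n - 3, by omega⟩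
        have hpx : px g = (i:ℝ)+3 := by rw [← hfx, hni]; push_cast; ring
        have hij : i ≤ j := by omega
        have hiM : i ≤ M - 1 := by omega
        have hir : (i:ℝ) ≤ (j:ℝ) := by exact_mod_cast hij
        rcases le_or_gt (i+2) M with hi2 | hi2
        · -- i ≤ M - 2 : interior vertical edges
          have hi2r : (i:ℝ) + 2 ≤ (M:ℝ) := by exact_mod_cast hi2
          have hytop : py g ≤ (M:ℝ)+1-i := by
            have := reg_y_at_integer (k := i+3) (by omega) hg (by rw [hpx]; push_cast; ring)
            have hc : ((i+3:ℕ):ℝ) = (i:ℝ)+3 := by push_cast; ring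
            rw [hc] at this
            linarith
          rcases lt_trichotomy (py g) ((M:ℝ)-i) with hyv | hyv | hyv
          · exfalso
            refine not_vertex_interior (box_subset_interior (a := 2+i) (b := 3+i)
              (by omega) (by omega) (lvl := (M:ℝ)-i) (fun k hk1 hk2 => by
                rw [hgt_eq_stair (by omega)]
                have : (k:ℝ) ≤ (3:ℕ)+i := by exact_mod_cast hk2
                push_cast at this ⊢
                linarith) ?_ ?_ hy ?_) hv
            · push_cast; linarith
            · push_cast; linarith
            · exact hyv
          · -- g = tlv M (i+1)
            have hgeq : g = tlv M (i+1) := by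
              refine pt_ext ?_ ?_ <;> simp [tlv, hpx, hyv] <;> push_cast <;> ring
            have hji1 : j ≤ i + 1 := by
              have : (M:ℝ)-i ≤ (M:ℝ)+1-j := by rw [← hyv]; exact hy1
              have : (j:ℝ) ≤ (i:ℝ)+1 := by linarith
              exact_mod_cast this
            rcases Nat.eq_or_lt_of_le hji1 with hji | hji
            · exact Or.inr (Or.inl (by rw [hgeq, hji]))
            · have : i = j := by omega
              subst this
              exact Or.inr (Or.inr (Or.inl ⟨by omega, by rw [hgeq]⟩))
          · rcases lt_trichotomy (py g) ((M:ℝ)+1-i) with hyw | hyw | hyw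
            · exfalso
              have hgeq : g = pt ((i:ℝ)+3) (py g) := pt_ext (by simp [hpx]) (by simp)
              exact nv_vert hi2 hyv hyw (hgeq ▸ hv)
            · -- g = trv M i, and i = j
              have hji : j ≤ i := by
                have : (M:ℝ)+1-i ≤ (M:ℝ)+1-j := by rw [← hyw]; exact hy1
                have : (j:ℝ) ≤ (i:ℝ) := by linarith
                exact_mod_cast this
              have : i = j := le_antisymm (by omega) hji
              subst this
              refine Or.inr (Or.inr (Or.inr (Or.inl ?_)))
              refine pt_ext ?_ ?_ <;> simp [trv, hpx, hyw]
            · exfalso; linarith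
        · -- i = M - 1 : right edge
          have hieq : i = M - 1 := by omega
          have hir2 : (i:ℝ) = (M:ℝ) - 1 := by
            have h1 : (1:ℕ) ≤ M := by omega
            rw [hieq]
            push_cast [h1]
            ring
          have hpxM : px g = (M:ℝ)+2 := by rw [hpx, hir2]; ring
          have hytop : py g ≤ 2 := by
            have := reg_y_at_integer (k := i+3) (by omega) hg (by rw [hpx]; push_cast; ring)
            have hc : ((i+3:ℕ):ℝ) = (i:ℝ)+3 := by push_cast; ring
            rw [hc, hir2] at this
            linarith
          have hjm : j = M - 1 := by omega
          rcases lt_or_eq_of_le hytop with hyv | hyv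
          · exfalso
            have hgeq : g = pt ((M:ℝ)+2) (py g) := pt_ext (by simp [hpxM]) (by simp)
            exact nv_right hM hy hyv (hgeq ▸ hv)
          · -- g = trv M j
            refine Or.inr (Or.inr (Or.inr (Or.inl ?_)))
            have hjr : (j:ℝ) = (M:ℝ) - 1 := by
              have h1 : (1:ℕ) ≤ M := by omega
              rw [hjm]
              push_cast [h1]
              ring
            refine pt_ext ?_ ?_ <;> simp [trv, hpxM, hjr] <;> linarith [hyv]
    · -- n < px g < n + 1 : strictly inside a column
      exfalso
      have hn2 : 2 ≤ n := by
        by_contra h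
        have : n + 1 ≤ 2 := by omega
        have : (n:ℝ) + 1 ≤ 2 := by exact_mod_cast this
        linarith
      have hnM : n < M + 2 := by
        by_contra h
        have : (M:ℝ) + 2 ≤ (n:ℝ) := by exact_mod_cast not_lt.mp h
        linarith
      rcases lt_trichotomy (py g) (hgt M n) with hyv | hyv | hyv
      · refine not_vertex_interior (box_subset_interior (a := n) (b := n) hnM le_rfl
          (lvl := hgt M n) (fun k hk1 hk2 => by rw [le_antisymm hk2 hk1]) hfx hfu hy hyv) hv
      · have hgeq : g = pt (px g) (hgt M n) := pt_ext (by simp) (by simp [hyv])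
        exact nv_top hnM hfx hfu (hgeq ▸ hv)
      · exact not_mem_reg_strict hfx hfu hyv hg


/-! A short path from `vstar` to any point of the spike. -/

lemma geodesic_vstar_spike {M : ℕ} {g : Plane} (h0 : 0 ≤ px g) (h1 : px g ≤ 1)
    (h2 : 0 ≤ py g) (h3 : py g ≤ 2) :
    geodesic (reg M) vstar g ≤ ENNReal.ofReal 3 := by
  set gx := px g with hgx
  set gy := py g with hgy
  set f : ℝ → Plane := fun t =>
    if t ≤ 1/3 then pt (2 - 3*t) 1
    else pt (1 + (3*t-1)/2*(gx-1)) (1 + (3*t-1)/2*(gy-1)) with hf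
  have hfeq : ∀ t : ℝ, 1/3 ≤ t →
      f t = pt (1 + (3*t-1)/2*(gx-1)) (1 + (3*t-1)/2*(gy-1)) := by
    intro t ht
    rw [hf]
    simp only []
    split_ifs with h
    · have : t = 1/3 := le_antisymm h ht
      subst this
      norm_num
    · rfl
  have hlip : LipschitzWith 3 f := by
    apply lipschitz_glue (a := 1/3)
    · apply LipschitzOnWith.of_dist_le_mul
      intro x hx y hy
      simp only [Set.mem_Iic] at hx hy
      rw [hf]
      simp only [if_pos hx, if_pos hy]
      rw [dist_plane]
      simp only [px_pt, py_pt, sub_self, abs_zero, add_zero]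
      have : (2 - 3*x) - (2 - 3*y) = 3*(y - x) := by ring
      rw [this, abs_mul, Real.dist_eq]
      simp only [NNReal.coe_ofNat, abs_of_nonneg (by norm_num : (0:ℝ) ≤ 3), abs_sub_comm x y]
      linarith [abs_nonneg (y - x)]
    · apply LipschitzOnWith.of_dist_le_mul
      intro x hx y hy
      simp only [Set.mem_Ici] at hx hy
      rw [hfeq x hx, hfeq y hy, dist_plane]
      simp only [px_pt, py_pt]
      have e1 : (1 + (3*x-1)/2*(gx-1)) - (1 + (3*y-1)/2*(gx-1)) = (3*(x-y)/2)*(gx-1) := by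
        ring
      have e2 : (1 + (3*x-1)/2*(gy-1)) - (1 + (3*y-1)/2*(gy-1)) = (3*(x-y)/2)*(gy-1) := by
        ring
      rw [e1, e2, abs_mul, abs_mul, Real.dist_eq]
      have hgx1 : |gx - 1| ≤ 1 := abs_le.mpr ⟨by linarith, by linarith⟩
      have hgy1 : |gy - 1| ≤ 1 := abs_le.mpr ⟨by linarith, by linarith⟩
      have h32 : |3*(x-y)/2| = (3/2) * |x - y| := by
        rw [show 3*(x-y)/2 = (3/2)*(x-y) by ring, abs_mul,
          abs_of_nonneg (by norm_num : (0:ℝ) ≤ 3/2)]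
      rw [h32]
      simp only [NNReal.coe_ofNat]
      nlinarith [abs_nonneg (x - y), mul_le_mul_of_nonneg_left hgx1
        (by positivity : (0:ℝ) ≤ (3/2) * |x-y|), mul_le_mul_of_nonneg_left hgy1
        (by positivity : (0:ℝ) ≤ (3/2) * |x-y|)]
  have hsrc : f 0 = vstar := by
    rw [hf]; norm_num [vstar]
  have htgt : f 1 = g := by
    rw [hfeq 1 (by norm_num)]
    norm_num
    exact pt_px_py g
  set γ : Path vstar g :=
    { toFun := fun t : unitInterval => f t
      continuous_toFun := hlip.continuous.comp continuous_subtype_val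
      source' := hsrc
      target' := htgt } with hγ
  have hrange : Set.range (fun t => γ t) ⊆ reg M := by
    rintro p ⟨t, rfl⟩
    show f t ∈ reg M
    rcases le_or_gt (t:ℝ) (1/3) with ht | ht
    · rw [hf]
      simp only [if_pos ht]
      refine mem_reg_col (k := 1) (by omega) ?_ ?_ ?_ ?_ <;>
        simp only [px_pt, py_pt, hgt1, Nat.cast_one]
      · have := t.2.1; linarith
      · have := t.2.1; linarith
      · norm_num
      · norm_num
    · rw [hfeq t (le_of_lt ht)]
      have ht1 := t.2.2
      have hs0 : 0 ≤ (3*(t:ℝ)-1)/2 := by linarith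
      have hs1 : (3*(t:ℝ)-1)/2 ≤ 1 := by linarith
      refine mem_reg_col (k := 0) (by omega) ?_ ?_ ?_ ?_ <;>
        simp only [px_pt, py_pt, hgt0, Nat.cast_zero]
      · nlinarith
      · nlinarith
      · nlinarith
      · nlinarith
  have hlip' : LipschitzWith 3 (fun t : unitInterval => γ t) := by
    have h1 : LipschitzWith 1 (fun t : unitInterval => (t : ℝ)) :=
      LipschitzWith.subtype_val _
    have := hlip.comp h1
    rw [mul_one] at this
    exact this
  have := geodesic_le_of_path γ hrange hlip'
  refine le_trans this ?_
  rw [show ((3:ℝ≥0):ℝ≥0∞) = ENNReal.ofReal 3 by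
    rw [ENNReal.ofReal]; norm_num]

/-! Dispersion helpers. -/

lemma dispersion_le_pair {S : Set Plane} {G : Finset Plane} {g g' : Plane}
    (hg : g ∈ G) (hg' : g' ∈ G) (hne : g ≠ g') :
    dispersion S G ≤ geodesic S g g' := by
  rw [dispersion]
  exact iInf_le_of_le g (iInf_le_of_le hg (iInf_le_of_le g'
    (iInf_le_of_le hg' (iInf_le _ hne))))

lemma le_dispersion_of {S : Set Plane} {G : Finset Plane} {ℓ : ℝ≥0∞}
    (h : ∀ g ∈ G, ∀ g' ∈ G, g ≠ g' → ℓ ≤ geodesic S g g') : ℓ ≤ dispersion S G := by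
  rw [dispersion]
  exact le_iInf fun g => le_iInf fun hg => le_iInf fun g' => le_iInf fun hg' =>
    le_iInf fun hne => h g hg g' hg' hne

lemma le_geodesic_of_dist {S : Set Plane} {p q : Plane} {r : ℝ} (h : r ≤ dist p q) :
    ENNReal.ofReal r ≤ geodesic S p q :=
  le_trans (by rw [edist_dist]; exact ENNReal.ofReal_le_ofReal h) edist_le_geodesic


/-! The dispersed guard set. -/

def Gstar (M : ℕ) : Finset Plane :=
  insert blv ((Finset.range (M/2)).image (fun i => tlv M (2*i+1)))

lemma Gstar_guard {M : ℕ} (hM : 4 ≤ M) (hEv : M % 2 = 0) :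
    IsGuardSet (reg M) (Gstar M) := by
  constructor
  · intro g hg
    rcases Finset.mem_insert.1 hg with rfl | hg
    · exact vertex_blv
    · obtain ⟨i, hi, rfl⟩ := Finset.mem_image.1 hg
      rw [Finset.mem_range] at hi
      exact vertex_tlv (by omega) (by omega)
  · intro p hp
    obtain ⟨c, hc, hc1, hc2, hc3, hc4⟩ := mem_reg_iff.1 hp
    match c, hc with
    | 0, _ =>
      refine ⟨blv, Finset.mem_insert_self _ _, see_blv_spike hp ?_⟩
      simpa using hc2
    | 1, _ =>
      refine ⟨blv, Finset.mem_insert_self _ _, see_blv_low hM hp ?_⟩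
      rw [hgt1] at hc4
      exact hc4
    | (j+2), hc =>
      have hj : j < M := by omega
      rw [show j+2 = 2+j by omega, hgt_stair] at hc4
      have hcast1 : ((j+2:ℕ):ℝ) = (j:ℝ)+2 := by push_cast; ring
      rw [hcast1] at hc1 hc2
      rcases Nat.even_or_odd j with hpar | hpar
      · -- guard tlv (j+1)
        have hj1 : j + 1 < M := by
          rcases hpar with ⟨r, hr⟩
          omega
        have himem : tlv M (j+1) ∈ Gstar M := by
          refine Finset.mem_insert_of_mem (Finset.mem_image.2 ⟨j/2, ?_, ?_⟩)
          · rw [Finset.mem_range]; omega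
          · congr 1
            rcases hpar with ⟨r, hr⟩
            omega
        refine ⟨tlv M (j+1), himem, see_tlv_left (by omega) hj1 ?_ ?_ hc3 ?_⟩
        · push_cast; linarith
        · push_cast; linarith
        · push_cast; linarith
      · -- guard tlv j
        have hj1 : 1 ≤ j := by
          rcases hpar with ⟨r, hr⟩
          omega
        have himem : tlv M j ∈ Gstar M := by
          refine Finset.mem_insert_of_mem (Finset.mem_image.2 ⟨j/2, ?_, ?_⟩)
          · rw [Finset.mem_range]; omega
          · congr 1
            rcases hpar with ⟨r, hr⟩
            omega
        refine ⟨tlv M j, himem, see_tlv_right hj ?_ ?_ hc3 ?_⟩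
        · linarith
        · linarith
        · linarith

lemma dist_blv_tlv {M a : ℕ} (ha : a < M) : dist blv (tlv M a) = (M:ℝ)+3 := by
  have har := jlt_cast ha
  rw [dist_plane]
  simp only [blv, tlv, px_pt, py_pt]
  rw [show (0:ℝ) - ((a:ℝ)+2) = -((a:ℝ)+2) by ring, abs_neg,
    show (0:ℝ) - ((M:ℝ)+1-a) = -((M:ℝ)+1-a) by ring, abs_neg,
    abs_of_nonneg (by positivity), abs_of_nonneg (by linarith)]
  ring

lemma dist_tlv_tlv {M a b : ℕ} (hab : a ≤ b) : dist (tlv M a) (tlv M b) = 2*((b:ℝ)-a) := by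
  have har : (a:ℝ) ≤ (b:ℝ) := by exact_mod_cast hab
  rw [dist_plane]
  simp only [tlv, px_pt, py_pt]
  rw [show ((a:ℝ)+2) - ((b:ℝ)+2) = -((b:ℝ)-a) by ring, abs_neg,
    show ((M:ℝ)+1-a) - ((M:ℝ)+1-b) = (b:ℝ)-a by ring,
    abs_of_nonneg (by linarith)]
  ring

lemma Gstar_disp {M : ℕ} (hM : 4 ≤ M) :
    ENNReal.ofReal 4 ≤ dispersion (reg M) (Gstar M) := by
  apply le_dispersion_of
  intro g hg g' hg' hne
  have hMr : (4:ℝ) ≤ (M:ℝ) := by exact_mod_cast hM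
  have key : ∀ a b : Plane, a ∈ Gstar M → b ∈ Gstar M → a ≠ b → (4:ℝ) ≤ dist a b := by
    intro a b ha hb hab
    rcases Finset.mem_insert.1 ha with rfl | ha <;>
      rcases Finset.mem_insert.1 hb with rfl | hb
    · exact absurd rfl hab
    · obtain ⟨i, hi, rfl⟩ := Finset.mem_image.1 hb
      rw [Finset.mem_range] at hi
      rw [dist_blv_tlv (by omega)]
      linarith
    · obtain ⟨i, hi, rfl⟩ := Finset.mem_image.1 ha
      rw [Finset.mem_range] at hi
      rw [dist_comm, dist_blv_tlv (by omega)]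
      linarith
    · obtain ⟨i, hi, rfl⟩ := Finset.mem_image.1 ha
      obtain ⟨i', hi', rfl⟩ := Finset.mem_image.1 hb
      rw [Finset.mem_range] at hi hi'
      have hii : i ≠ i' := by
        intro h
        exact hab (by rw [h])
      rcases Nat.lt_or_ge i i' with h | h
      · have h2 : 2*i+1+2 ≤ 2*i'+1 := by omega
        rw [dist_tlv_tlv (by omega)]
        have : ((2*i+1:ℕ):ℝ) + 2 ≤ ((2*i'+1:ℕ):ℝ) := by exact_mod_cast h2
        linarith
      · have hlt : i' < i := by omega
        have h2 : 2*i'+1+2 ≤ 2*i+1 := by omega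
        rw [dist_comm, dist_tlv_tlv (by omega)]
        have : ((2*i'+1:ℕ):ℝ) + 2 ≤ ((2*i+1:ℕ):ℝ) := by exact_mod_cast h2
        linarith
  exact le_geodesic_of_dist (key g g' hg hg' hne)

/-! Window argument. -/

lemma P_px_bounds {M j : ℕ} (hj : j < M) {g : Plane}
    (hP : g = tlv M j ∨ (j+1 < M ∧ g = tlv M (j+1)) ∨ g = trv M j ∨
      (j = M-1 ∧ g = brv M)) : (j:ℝ)+2 ≤ px g ∧ px g ≤ (j:ℝ)+3 := by
  rcases hP with rfl | ⟨h1, rfl⟩ | rfl | ⟨h1, rfl⟩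
  · simp only [tlv, px_pt]
    constructor <;> linarith
  · simp only [tlv, px_pt]
    have : ((j+1:ℕ):ℝ) = (j:ℝ)+1 := by push_cast; ring
    rw [this]
    constructor <;> linarith
  · simp only [trv, px_pt]
    constructor <;> linarith
  · simp only [brv, px_pt]
    have hjr : (j:ℝ) = (M:ℝ)-1 := by
      have hM1 : (1:ℕ) ≤ M := by omega
      rw [h1]
      push_cast [hM1]
      ring
    rw [hjr]
    constructor <;> linarith


lemma fiber_le_two {M : ℕ} {c : ℕ → Plane}
    (hPX : ∀ j, j < M → ((j:ℝ)+2 ≤ px (c j) ∧ px (c j) ≤ (j:ℝ)+3)) (b : Plane) :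
    ((Finset.range M).filter (fun j => c j = b)).card ≤ 2 := by
  set F := (Finset.range M).filter (fun j => c j = b) with hF
  rcases F.eq_empty_or_nonempty with h | h
  · simp [h]
  · have hmem : ∀ j ∈ F, j < M ∧ c j = b := by
      intro j hj
      rw [hF, Finset.mem_filter, Finset.mem_range] at hj
      exact hj
    set j0 := F.min' h with hj0'
    have hj0 := hmem j0 (F.min'_mem h)
    have hsub : F ⊆ Finset.Icc j0 (j0+1) := by
      intro j hj
      have hjm := hmem j hj
      rw [Finset.mem_Icc]
      refine ⟨F.min'_le j hj, ?_⟩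
      by_contra hcon
      push_neg at hcon
      have h2 : (j0:ℝ)+2 ≤ (j:ℝ) := by exact_mod_cast (by omega : j0+2 ≤ j)
      have hA := hPX j0 hj0.1
      have hB := hPX j hjm.1
      rw [hj0.2] at hA
      rw [hjm.2] at hB
      linarith [hA.2, hB.1]
    calc F.card ≤ (Finset.Icc j0 (j0+1)).card := Finset.card_le_card hsub
      _ = 2 := by rw [Nat.card_Icc]; omega

lemma gmin_card : ({vstar, tplv} : Finset Plane).card = 2 := by
  rw [Finset.card_insert_of_notMem, Finset.card_singleton]
  simp only [Finset.mem_singleton]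
  intro h
  have h2 := congrArg px h
  simp only [vstar, tplv, px_pt] at h2
  norm_num at h2

end Construction


/-- For every `m : ℕ` there exists a histogram polygon such that every
vertex guard set attaining the maximum possible dispersion distance has cardinality at
least `m` times the minimum cardinality of a vertex guard set; hence the ratio between
the size of a smallest maximally dispersed vertex guard set and the size of a smallest
vertex guard set is unbounded, even for histograms. -/
theorem histogram_dispersive_ratio_unbounded (m : ℕ) :
    ∃ H : Histogram, ∃ Gmin : Finset Plane,
      IsGuardSet H.region Gmin ∧
      (∀ G' : Finset Plane, IsGuardSet H.region G' → Gmin.card ≤ G'.card) ∧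
      ∀ G : Finset Plane, AttainsMaxDispersion H.region G → m * Gmin.card ≤ G.card := by
  set K := max m 1 with hK
  set M := 4 * K with hMdef
  have hK1 : 1 ≤ K := le_max_right m 1
  have hKm : m ≤ K := le_max_left m 1
  have hM : 4 ≤ M := by omega
  have hEv : M % 2 = 0 := by omega
  refine ⟨hist M hM, {vstar, tplv}, ?_, ?_, ?_⟩ <;> rw [hist_region M hM]
  · -- Gmin is a guard set
    constructor
    · intro g hg
      rcases Finset.mem_insert.1 hg with rfl | hg
      · exact vertex_vstar hM
      · rw [Finset.mem_singleton] at hg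
        subst hg
        exact vertex_tplv
    · intro p hp
      obtain ⟨c, hc, hc1, hc2, hc3, hc4⟩ := mem_reg_iff.1 hp
      match c, hc with
      | 0, _ =>
        exact ⟨tplv, by simp, see_tplv hp (by simpa using hc2)⟩
      | 1, _ =>
        rw [hgt1] at hc4
        refine ⟨vstar, by simp, see_vstar_notch (by exact_mod_cast hc1) ?_ hc3 hc4⟩
        push_cast at hc2
        linarith
      | (j+2), hc =>
        have hj : j < M := by omega
        rw [show j+2 = 2+j by omega, hgt_stair] at hc4
        refine ⟨vstar, by simp, see_vstar_stair hj ?_ ?_ hc3 hc4⟩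
        · push_cast at hc1; linarith
        · push_cast at hc2; linarith
  · -- Gmin is a minimum cardinality guard set
    rintro G' ⟨hvert, hcov⟩
    obtain ⟨gs, hgs, hsee_s⟩ := hcov spikePt spikePt_mem
    obtain ⟨g0, hg0, hsee_0⟩ := hcov (stepPt M 0) (stepPt_mem (by omega))
    have h1 := (see_spike_constraints hsee_s).2.1
    have h2 := (see_step_constraints hM (by omega) hsee_0).1
    rw [gmin_card]
    refine Finset.one_lt_card.2 ⟨g0, hg0, gs, hgs, ?_⟩
    intro h
    rw [h] at h2
    linarith
  · -- every maximally dispersed guard set is large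
    intro G hG
    obtain ⟨⟨hGvert, hGcov⟩, hGmax⟩ := hG
    have hdisp : ENNReal.ofReal 4 ≤ dispersion (reg M) G :=
      le_trans (Gstar_disp hM) (hGmax _ (Gstar_guard hM hEv))
    have hvnot : vstar ∉ G := by
      intro hv
      obtain ⟨gs, hgs, hsee_s⟩ := hGcov spikePt spikePt_mem
      obtain ⟨s0, s1, s2, s3⟩ := see_spike_constraints hsee_s
      have hne : vstar ≠ gs := by
        intro h
        rw [← h] at s1
        norm_num [vstar] at s1
      have hle : dispersion (reg M) G ≤ geodesic (reg M) vstar gs :=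
        dispersion_le_pair hv hgs hne
      have hge : geodesic (reg M) vstar gs ≤ ENNReal.ofReal 3 :=
        geodesic_vstar_spike s0 s1 s2 s3
      have hcon : ENNReal.ofReal 4 ≤ ENNReal.ofReal 3 :=
        le_trans hdisp (le_trans hle hge)
      rw [ENNReal.ofReal_le_ofReal_iff (by norm_num)] at hcon
      linarith
    have hstep : ∀ j : ℕ, ∃ g : Plane, j < M → g ∈ G ∧ RSee (reg M) g (stepPt M j) := by
      intro j
      rcases lt_or_ge j M with hj | hj
      · obtain ⟨g, hg, hsee⟩ := hGcov (stepPt M j) (stepPt_mem hj)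
        exact ⟨g, fun _ => ⟨hg, hsee⟩⟩
      · exact ⟨vstar, fun h => absurd h (by omega)⟩
    choose cfun hcfun using hstep
    have hmaps : ∀ j ∈ Finset.range M, cfun j ∈ G := fun j hj =>
      (hcfun j (Finset.mem_range.1 hj)).1
    have hPX : ∀ j, j < M → ((j:ℝ)+2 ≤ px (cfun j) ∧ px (cfun j) ≤ (j:ℝ)+3) := by
      intro j hj
      obtain ⟨hgG, hsee⟩ := hcfun j hj
      rcases step_guard_cases hM hj (hGvert _ hgG) hsee with h | h
      · exact absurd (h ▸ hgG) hvnot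
      · exact P_px_bounds hj h
    have hcount : M ≤ 2 * G.card := by
      have hle := Finset.card_le_mul_card_image_of_maps_to hmaps 2
        (fun b _ => fiber_le_two hPX b)
      simpa using hle
    rw [gmin_card]
    have : G.card ≥ 2 * K := by omega
    omega
end DispersiveAGP
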